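/- Every stable self-similar necklace in ℝ^d satisfying the open set condition has no cut points. -/

import Mathlib

open Set Topology Metric Bornology

noncomputable section

/-- Euclidean space `ℝ^d`. -/
abbrev Euc (d : ℕ) := EuclideanSpace ℝ (Fin d)

/-- A fractal necklace in `ℝ^d`: the attractor `F` of a necklace IFS `f_1, …, f_n`
(`n ≥ 3`) of contractive homeomorphisms of `ℝ^d`, where cyclically adjacent 1-level
copies meet in a single point (a main node `z k`) and non-adjacent copies are disjoint. -/
structure Necklace (d : ℕ) where
  n : ℕ
  hn : 3 ≤ n
  f : Fin n → (Euc d ≃ₜ Euc d)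
  contr : ∀ k, ∃ c : NNReal, c < 1 ∧ LipschitzWith c (f k)
  F : Set (Euc d)
  Fne : F.Nonempty
  Fcpt : IsCompact F
  Fattr : F = ⋃ k, (f k) '' F
  z : Fin n → Euc d
  hz : ∀ k : Fin n, (f k) '' F ∩ (f (k + ⟨1, by omega⟩)) '' F = {z k}
  hdisj : ∀ m k : Fin n, m ≠ k → m ≠ k + ⟨1, by omega⟩ → k ≠ m + ⟨1, by omega⟩ →
    (f m) '' F ∩ (f k) '' F = ∅

namespace Necklace

variable {d : ℕ}

/-- The digit `1` of `Fin n`. -/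
def one (N : Necklace d) : Fin N.n := ⟨1, by have := N.hn; omega⟩

/-- The homeomorphism `f_σ = f_{i₁} ∘ ⋯ ∘ f_{i_m}` associated to a word `σ = i₁⋯i_m`. -/
def word (N : Necklace d) : List (Fin N.n) → (Euc d ≃ₜ Euc d)
  | [] => Homeomorph.refl _
  | i :: s => (N.word s).trans (N.f i)

/-- The copy `F_σ = f_σ(F)` of the necklace. -/
def copy (N : Necklace d) (σ : List (Fin N.n)) : Set (Euc d) := N.word σ '' N.F

/-- `c_m(x)`: the number of words `σ` of length `m` with `x ∈ F_σ`. -/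
def cnt (N : Necklace d) (m : ℕ) (x : Euc d) : ℕ :=
  Set.ncard {σ : List (Fin N.n) | σ.length = m ∧ x ∈ N.copy σ}

/-- The boundary `∂_F F_k = {z_{k-1}, z_k}` of the 1-level copy `F_k` in `F`. -/
def bdry (N : Necklace d) (k : Fin N.n) : Set (Euc d) := {N.z (k - N.one), N.z k}

/-- A necklace is stable if for each `k` at least two second-level copies `F_{kj}`
meet `∂_F F_k`. -/
def Stable (N : Necklace d) : Prop :=
  ∀ k : Fin N.n,
    2 ≤ Set.ncard {A : Set (Euc d) |
      (∃ j : Fin N.n, A = N.f k '' (N.f j '' N.F)) ∧ (A ∩ N.bdry k).Nonempty}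

/-- A necklace is good if `∂_F F_k` is not contained in any second-level copy `F_{kj}`. -/
def Good (N : Necklace d) : Prop :=
  ∀ k j : Fin N.n, ¬ (N.bdry k ⊆ N.f k '' (N.f j '' N.F))

/-- A necklace is of bounded ramification if `{c_m(z_k)}_m` is bounded for each `k`. -/
def BoundedRamification (N : Necklace d) : Prop :=
  ∀ k : Fin N.n, ∃ C : ℕ, ∀ m : ℕ, N.cnt m (N.z k) ≤ C

/-- `M_F`: the set of points that are main nodes of some copy of `F`. -/
def MF (N : Necklace d) : Set (Euc d) :=
  {x | ∃ (σ : List (Fin N.n)) (k : Fin N.n), x = N.word σ (N.z k)}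

/-- A necklace has no cut points if `F \ {x}` is connected for every `x ∈ F`. -/
def NoCutPoints (N : Necklace d) : Prop :=
  ∀ x ∈ N.F, IsConnected (N.F \ {x})

/-- Property I: each 1-level copy `F_k` has an arc from `z_{k-1}` to `z_k` passing
through at least two main nodes of `F_k`. -/
def PropertyI (N : Necklace d) : Prop :=
  ∀ k : Fin N.n, ∃ γ : Path (N.z (k - N.one)) (N.z k),
    Function.Injective γ ∧ (∀ t, γ t ∈ N.f k '' N.F) ∧
    ∃ p q : Euc d, p ≠ q ∧ (∃ j, p = N.f k (N.z j)) ∧ (∃ j, q = N.f k (N.z j)) ∧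
      p ∈ Set.range γ ∧ q ∈ Set.range γ

/-- A necklace is self-similar if the maps of its NIFS are (contractive) similitudes. -/
def SelfSimilar (N : Necklace d) : Prop :=
  ∀ k : Fin N.n, ∃ c : ℝ, 0 < c ∧ c < 1 ∧ ∀ x y, dist (N.f k x) (N.f k y) = c * dist x y

/-- The open set condition for the NIFS of a necklace. -/
def OSC (N : Necklace d) : Prop :=
  ∃ V : Set (Euc d), V.Nonempty ∧ IsOpen V ∧ IsBounded V ∧
    (∀ k, N.f k '' V ⊆ V) ∧ ∀ j k : Fin N.n, j ≠ k → N.f j '' V ∩ N.f k '' V = ∅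

end Necklace

open Fin.NatCast Fin.CommRing

-- ===================== auxiliary development =====================
namespace Necklace

variable {d : ℕ} (N : Necklace d)

instance (N : Necklace d) : NeZero N.n := ⟨by have := N.hn; omega⟩

lemma word_apply_cons (i : Fin N.n) (s : List (Fin N.n)) (x : Euc d) :
    N.word (i :: s) x = N.f i (N.word s x) := rfl

lemma word_append (s t : List (Fin N.n)) (x : Euc d) :
    N.word (s ++ t) x = N.word s (N.word t x) := by
  induction s with
  | nil => rfl
  | cons a s ih => simp only [List.cons_append, word_apply_cons, ih]

lemma copy_nil : N.copy [] = N.F := by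
  simp [Necklace.copy, Necklace.word]

lemma copy_append (s t : List (Fin N.n)) : N.copy (s ++ t) = N.word s '' N.copy t := by
  unfold Necklace.copy
  rw [Set.image_image]
  congr 1
  funext x
  exact word_append N s t x

lemma copy_concat (s : List (Fin N.n)) (j : Fin N.n) :
    N.copy (s ++ [j]) = N.word s '' (N.f j '' N.F) := by
  rw [copy_append]
  congr 1

lemma copy_cons (i : Fin N.n) (s : List (Fin N.n)) : N.copy (i :: s) = N.f i '' N.copy s := by
  have h : (i :: s) = [i] ++ s := rfl
  rw [h, copy_append]
  exact Set.image_congr (fun a _ => rfl)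

lemma word_cons_image (i : Fin N.n) (s : List (Fin N.n)) (A : Set (Euc d)) :
    N.word (i :: s) '' A = N.f i '' (N.word s '' A) := by
  rw [Set.image_image]
  exact Set.image_congr fun a _ => rfl

lemma copy_subset_F (s : List (Fin N.n)) : N.copy s ⊆ N.F := by
  induction s with
  | nil => rw [copy_nil]
  | cons a s ih =>
      rw [copy_cons]
      refine subset_trans (Set.image_mono ih) ?_
      intro y hy
      rw [N.Fattr]
      exact Set.mem_iUnion.2 ⟨a, hy⟩

lemma copy_eq_iUnion (s : List (Fin N.n)) : N.copy s = ⋃ j, N.copy (s ++ [j]) := by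
  conv_lhs => rw [Necklace.copy, N.Fattr]
  rw [Set.image_iUnion]
  refine iUnion_congr fun j => ?_
  rw [copy_concat]

lemma copy_nonempty (s : List (Fin N.n)) : (N.copy s).Nonempty := N.Fne.image _

lemma copy_compact (s : List (Fin N.n)) : IsCompact (N.copy s) :=
  N.Fcpt.image (N.word s).continuous

lemma word_injective (s : List (Fin N.n)) : Function.Injective (N.word s) :=
  (N.word s).injective

lemma copy_prefix_subset {s t : List (Fin N.n)} (h : s <+: t) : N.copy t ⊆ N.copy s := by
  obtain ⟨u, rfl⟩ := h
  rw [copy_append]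
  exact (Set.image_mono (copy_subset_F N u)).trans (le_refl _)

lemma child_inter (s : List (Fin N.n)) (j : Fin N.n) :
    N.copy (s ++ [j]) ∩ N.copy (s ++ [j + N.one]) = {N.word s (N.z j)} := by
  rw [copy_concat, copy_concat, ← Set.image_inter (word_injective N s)]
  have : N.f j '' N.F ∩ N.f (j + N.one) '' N.F = {N.z j} := N.hz j
  rw [this, Set.image_singleton]

lemma child_disj {i j : Fin N.n} (s : List (Fin N.n)) (h1 : i ≠ j) (h2 : i ≠ j + N.one)
    (h3 : j ≠ i + N.one) : N.copy (s ++ [i]) ∩ N.copy (s ++ [j]) = ∅ := by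
  rw [copy_concat, copy_concat, ← Set.image_inter (word_injective N s)]
  rw [N.hdisj i j h1 h2 h3, Set.image_empty]

lemma z_mem_left (k : Fin N.n) : N.z k ∈ N.f k '' N.F := by
  have : N.z k ∈ ({N.z k} : Set (Euc d)) := rfl
  rw [← N.hz k] at this
  exact this.1

lemma z_mem_right (k : Fin N.n) : N.z k ∈ N.f (k + N.one) '' N.F := by
  have : N.z k ∈ ({N.z k} : Set (Euc d)) := rfl
  rw [← N.hz k] at this
  exact this.2

lemma z_mem_F (k : Fin N.n) : N.z k ∈ N.F := by
  have := z_mem_left N k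
  have h2 : N.f k '' N.F ⊆ N.F := by
    intro y hy; rw [N.Fattr]; exact Set.mem_iUnion.2 ⟨k, hy⟩
  exact h2 this

end Necklace

namespace Necklace

section Metric

variable {d : ℕ} (N : Necklace d)
variable (c : Fin N.n → ℝ) (hc0 : ∀ k, 0 < c k)
  (hcd : ∀ k x y, dist (N.f k x) (N.f k y) = c k * dist x y)
variable (cmin cmax : ℝ) (hcmin : ∀ k, cmin ≤ c k) (hcmin0 : 0 < cmin)
  (hcmax : ∀ k, c k ≤ cmax) (hcmax1 : cmax < 1)

/-- product of the ratios along a word -/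
def cw (σ : List (Fin N.n)) : ℝ := (σ.map c).prod

lemma cw_nil : cw N c [] = 1 := rfl

lemma cw_cons (i : Fin N.n) (s : List (Fin N.n)) : cw N c (i :: s) = c i * cw N c s := by
  simp [Necklace.cw]

lemma cw_append (s t : List (Fin N.n)) : cw N c (s ++ t) = cw N c s * cw N c t := by
  simp [Necklace.cw]

include hc0 in
lemma cw_pos (σ : List (Fin N.n)) : 0 < cw N c σ := by
  induction σ with
  | nil => norm_num [cw_nil]
  | cons a s ih => rw [cw_cons]; exact mul_pos (hc0 a) ih

include hcd in
lemma dist_word (σ : List (Fin N.n)) (x y : Euc d) :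
    dist (N.word σ x) (N.word σ y) = cw N c σ * dist x y := by
  induction σ with
  | nil => simp [cw_nil]; rfl
  | cons a s ih =>
      rw [word_apply_cons, word_apply_cons, hcd, ih, cw_cons, mul_assoc]

include hc0 hcmax hcmax1 in
lemma cw_le_pow (σ : List (Fin N.n)) : cw N c σ ≤ cmax ^ σ.length := by
  induction σ with
  | nil => simp [cw_nil]
  | cons a s ih =>
      rw [cw_cons]
      have h1 : 0 < cmax := lt_of_lt_of_le (hc0 a) (hcmax a)
      calc c a * cw N c s ≤ cmax * cmax ^ s.length := by
            apply mul_le_mul (hcmax a) ih (le_of_lt (cw_pos N c hc0 s)) (le_of_lt h1)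
        _ = cmax ^ (a :: s).length := by rw [List.length_cons, pow_succ, mul_comm]

include hcmin hcmin0 in
lemma pow_le_cw (σ : List (Fin N.n)) : cmin ^ σ.length ≤ cw N c σ := by
  induction σ with
  | nil => simp [cw_nil]
  | cons a s ih =>
      rw [cw_cons, List.length_cons, pow_succ, mul_comm (cmin ^ s.length) cmin]
      apply mul_le_mul (hcmin a) ih (le_of_lt (pow_pos hcmin0 _))
      exact le_of_lt (lt_of_lt_of_le hcmin0 (hcmin a))

include hc0 hcd in
lemma dist_le_of_mem_copy {σ : List (Fin N.n)} {a b : Euc d} (ha : a ∈ N.copy σ)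
    (hb : b ∈ N.copy σ) : dist a b ≤ cw N c σ * Metric.diam N.F := by
  obtain ⟨a', ha', rfl⟩ := ha
  obtain ⟨b', hb', rfl⟩ := hb
  rw [dist_word N c hcd]
  have h0 : 0 < cw N c σ := cw_pos N c hc0 σ
  have hd : dist a' b' ≤ Metric.diam N.F :=
    Metric.dist_le_diam_of_mem N.Fcpt.isBounded ha' hb'
  nlinarith

end Metric

end Necklace

namespace Necklace

section Conn

variable {d : ℕ} (N : Necklace d)
variable (c : Fin N.n → ℝ) (hc0 : ∀ k, 0 < c k)
  (hcd : ∀ k x y, dist (N.f k x) (N.f k y) = c k * dist x y)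
variable (cmax : ℝ) (hcmax : ∀ k, c k ≤ cmax) (hcmax1 : cmax < 1)

/-- one step of size `ε` inside `F` -/
def stepRel (ε : ℝ) (u v : Euc d) : Prop := v ∈ N.F ∧ dist u v ≤ ε

/-- reachability by `ε`-chains inside `F` -/
def Reach (ε : ℝ) (u v : Euc d) : Prop := Relation.ReflTransGen (N.stepRel ε) u v

lemma Reach.mono {ε ε' : ℝ} (h : ε ≤ ε') {u v : Euc d} (hr : N.Reach ε u v) :
    N.Reach ε' u v := by
  induction hr with
  | refl => exact Relation.ReflTransGen.refl
  | tail h1 h2 ih => exact Relation.ReflTransGen.tail ih ⟨h2.1, h2.2.trans h⟩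

include hc0 hcd in
lemma Reach.map {ε : ℝ} (hε : 0 ≤ ε) (k : Fin N.n) {u v : Euc d} (hr : N.Reach ε u v) :
    N.Reach (c k * ε) (N.f k u) (N.f k v) := by
  induction hr with
  | refl => exact Relation.ReflTransGen.refl
  | tail h1 h2 ih =>
      refine Relation.ReflTransGen.tail ih ⟨?_, ?_⟩
      · have : N.f k '' N.F ⊆ N.F := by
          intro y hy; rw [N.Fattr]; exact Set.mem_iUnion.2 ⟨k, hy⟩
        exact this ⟨_, h2.1, rfl⟩
      · rw [hcd]
        exact mul_le_mul_of_nonneg_left h2.2 (le_of_lt (hc0 k))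

lemma one_eq_one : (N.one : Fin N.n) = (1 : Fin N.n) := by
  have h3 := N.hn
  apply Fin.ext
  rw [Fin.val_one']
  simp [Necklace.one, Nat.mod_eq_of_lt (show 1 < N.n by omega)]

include hc0 hcd hcmax hcmax1 in
lemma chainF : ∀ (m : ℕ) (a : Euc d), a ∈ N.F → ∀ b ∈ N.F,
    N.Reach (cmax ^ m * Metric.diam N.F) a b := by
  have hD : 0 ≤ Metric.diam N.F := Metric.diam_nonneg
  have hk0 : (0 : ℕ) < N.n := by have := N.hn; omega
  have hcmax0 : 0 < cmax := lt_of_lt_of_le (hc0 ⟨0, hk0⟩) (hcmax ⟨0, hk0⟩)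
  intro m
  induction m with
  | zero =>
      intro a ha b hb
      refine Relation.ReflTransGen.single ⟨hb, ?_⟩
      rw [pow_zero, one_mul]
      exact Metric.dist_le_diam_of_mem N.Fcpt.isBounded ha hb
  | succ m ih =>
      -- within one first-level copy
      have incopy : ∀ (j : Fin N.n) (a : Euc d), a ∈ N.f j '' N.F → ∀ b ∈ N.f j '' N.F,
          N.Reach (cmax ^ (m + 1) * Metric.diam N.F) a b := by
        rintro j a ⟨a', ha', rfl⟩ b ⟨b', hb', rfl⟩
        have h1 := Reach.map N c hc0 hcd (by positivity) j (ih a' ha' b' hb')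
        refine Reach.mono N ?_ h1
        have : c j * (cmax ^ m * Metric.diam N.F) ≤ cmax * (cmax ^ m * Metric.diam N.F) :=
          mul_le_mul_of_nonneg_right (hcmax j) (by positivity)
        calc c j * (cmax ^ m * Metric.diam N.F) ≤ cmax * (cmax ^ m * Metric.diam N.F) := this
          _ = cmax ^ (m + 1) * Metric.diam N.F := by ring
      -- walk around the cycle
      have walk : ∀ (t : ℕ) (j : Fin N.n) (a : Euc d), a ∈ N.f j '' N.F →
          ∀ b ∈ N.f (j + (t : Fin N.n)) '' N.F,
          N.Reach (cmax ^ (m + 1) * Metric.diam N.F) a b := by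
        intro t
        induction t with
        | zero =>
            intro j a ha b hb
            rw [Nat.cast_zero, add_zero] at hb
            exact incopy j a ha b hb
        | succ t iht =>
            intro j a ha b hb
            have hz1 : N.z j ∈ N.f j '' N.F := z_mem_left N j
            have hz2 : N.z j ∈ N.f (j + N.one) '' N.F := z_mem_right N j
            have step1 := incopy j a ha (N.z j) hz1
            have hcast : j + ((t + 1 : ℕ) : Fin N.n) = (j + N.one) + (t : Fin N.n) := by
              rw [one_eq_one]
              push_cast
              ring
            rw [hcast] at hb
            have step2 := iht (j + N.one) (N.z j) hz2 b hb
            exact Relation.ReflTransGen.trans step1 step2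
      intro a ha b hb
      rw [N.Fattr] at ha hb
      obtain ⟨Sa, ⟨j, rfl⟩, ha⟩ := ha
      obtain ⟨Sb, ⟨k, rfl⟩, hb⟩ := hb
      have : k = j + (((k - j).val : ℕ) : Fin N.n) := by
        rw [Fin.cast_val_eq_self (k - j)]
        simp
      rw [this] at hb
      exact walk (k - j).val j a ha b hb

include hc0 hcd hcmax hcmax1 in
lemma F_isPreconnected : IsPreconnected N.F := by
  have hD : 0 ≤ Metric.diam N.F := Metric.diam_nonneg
  rw [isPreconnected_iff_subset_of_disjoint]
  intro u v hu hv hcov hdis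
  by_contra hcon
  push_neg at hcon
  obtain ⟨hnotu, hnotv⟩ := hcon
  -- both parts nonempty
  have hAne : (N.F ∩ u).Nonempty := by
    rcases Set.not_subset.1 hnotv with ⟨a, haF, hav⟩
    rcases hcov haF with h | h
    · exact ⟨a, haF, h⟩
    · exact absurd h hav
  have hBne : (N.F ∩ v).Nonempty := by
    rcases Set.not_subset.1 hnotu with ⟨a, haF, hau⟩
    rcases hcov haF with h | h
    · exact absurd h hau
    · exact ⟨a, haF, h⟩
  have hdisj : N.F ∩ u ∩ (N.F ∩ v) = ∅ := by
    rw [Set.eq_empty_iff_forall_notMem]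
    rintro y ⟨⟨hyF, hyu⟩, -, hyv⟩
    have : y ∈ N.F ∩ (u ∩ v) := ⟨hyF, hyu, hyv⟩
    rw [hdis] at this
    exact this
  set A := N.F ∩ u with hA
  set B := N.F ∩ v with hB
  have hAc : IsCompact A := by
    have : A = N.F ∩ vᶜ := by
      ext y
      constructor
      · rintro ⟨h1, h2⟩
        refine ⟨h1, fun hv' => ?_⟩
        have : y ∈ A ∩ B := ⟨⟨h1, h2⟩, ⟨h1, hv'⟩⟩
        rw [hdisj] at this
        exact this
      · rintro ⟨h1, h2⟩
        rcases hcov h1 with h | h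
        · exact ⟨h1, h⟩
        · exact absurd h h2
    rw [this]
    exact N.Fcpt.inter_right (isClosed_compl_iff.2 hv)
  have hBc : IsCompact B := by
    have : B = N.F ∩ uᶜ := by
      ext y
      constructor
      · rintro ⟨h1, h2⟩
        refine ⟨h1, fun hu' => ?_⟩
        have : y ∈ A ∩ B := ⟨⟨h1, hu'⟩, ⟨h1, h2⟩⟩
        rw [hdisj] at this
        exact this
      · rintro ⟨h1, h2⟩
        rcases hcov h1 with h | h
        · exact absurd h h2
        · exact ⟨h1, h⟩
    rw [this]
    exact N.Fcpt.inter_right (isClosed_compl_iff.2 hu)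
  -- minimal distance between A and B
  obtain ⟨p, hp, hpmin'⟩ := (hAc.prod hBc).exists_isMinOn (hAne.prod hBne)
    (continuous_dist.continuousOn :
      ContinuousOn (fun q : Euc d × Euc d => dist q.1 q.2) (A ×ˢ B))
  have hpmin : ∀ q ∈ A ×ˢ B, dist p.1 p.2 ≤ dist q.1 q.2 := fun q hq => hpmin' hq
  set δ := dist p.1 p.2 with hδdef
  have hδ : 0 < δ := by
    rcases hp with ⟨hp1, hp2⟩
    rw [hδdef, dist_pos]
    intro hEq
    have : p.1 ∈ A ∩ B := ⟨hp1, hEq ▸ hp2⟩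
    rw [hdisj] at this
    exact this
  -- get a fine chain
  have hk0 : (0 : ℕ) < N.n := by have := N.hn; omega
  have hcmax0 : 0 < cmax := lt_of_lt_of_le (hc0 ⟨0, hk0⟩) (hcmax ⟨0, hk0⟩)
  obtain ⟨m, hm⟩ := exists_pow_lt_of_lt_one
    (show 0 < δ / (Metric.diam N.F + 1) by positivity) hcmax1
  have hfine : cmax ^ m * Metric.diam N.F < δ := by
    have h1 : cmax ^ m * Metric.diam N.F ≤ cmax ^ m * (Metric.diam N.F + 1) := by
      have : (0:ℝ) < cmax ^ m := by positivity
      nlinarith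
    have h2 : cmax ^ m * (Metric.diam N.F + 1) < δ := by
      rw [div_eq_inv_mul] at hm
      have hD1 : (0:ℝ) < Metric.diam N.F + 1 := by positivity
      calc cmax ^ m * (Metric.diam N.F + 1) < (Metric.diam N.F + 1)⁻¹ * δ * (Metric.diam N.F + 1) := by
            apply mul_lt_mul_of_pos_right hm hD1
        _ = δ := by field_simp
    linarith
  obtain ⟨a, haF, hau⟩ := hAne
  obtain ⟨b, hbF, hbv⟩ := hBne
  have hreach := chainF N c hc0 hcd cmax hcmax hcmax1 m a haF b hbF
  -- chains cannot jump from A to B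
  have stay : ∀ y : Euc d, N.Reach (cmax ^ m * Metric.diam N.F) a y → y ∈ A := by
    intro y hy
    induction hy with
    | refl => exact ⟨haF, hau⟩
    | @tail y' y'' h1 h2 ih =>
        rcases hcov h2.1 with h | h
        · exact ⟨h2.1, h⟩
        · exfalso
          have hyB : y'' ∈ B := ⟨h2.1, h⟩
          have := hpmin (y', y'') ⟨ih, hyB⟩
          have hlt : dist y' y'' < δ := lt_of_le_of_lt h2.2 hfine
          simp only at this
          linarith
  have hbA : b ∈ A := stay b hreach
  have : b ∈ A ∩ B := ⟨hbA, ⟨hbF, hbv⟩⟩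
  rw [hdisj] at this
  exact this

end Conn

end Necklace

namespace Necklace

section OSCsec

variable {d : ℕ} (N : Necklace d)
variable (c : Fin N.n → ℝ) (hc0 : ∀ k, 0 < c k)
  (hcd : ∀ k x y, dist (N.f k x) (N.f k y) = c k * dist x y)
variable (cmin cmax : ℝ) (hcmin : ∀ k, cmin ≤ c k) (hcmin0 : 0 < cmin)
  (hcmax : ∀ k, c k ≤ cmax) (hcmax1 : cmax < 1)
variable (V : Set (Euc d)) (hVne : V.Nonempty) (hVo : IsOpen V)
  (hVsub : ∀ k, N.f k '' V ⊆ V)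
  (hVdisj : ∀ j k : Fin N.n, j ≠ k → N.f j '' V ∩ N.f k '' V = ∅)

include hVsub in
lemma wordV_subset (s : List (Fin N.n)) : N.word s '' V ⊆ V := by
  induction s with
  | nil => intro y ⟨x, hx, hxy⟩; rwa [← hxy]
  | cons a s ih =>
      intro y ⟨x, hx, hxy⟩
      rw [← hxy, word_apply_cons]
      exact hVsub a ⟨_, ih ⟨x, hx, rfl⟩, rfl⟩

include hVsub hVdisj in
lemma incomp_disjoint : ∀ (s t : List (Fin N.n)), ¬ s <+: t → ¬ t <+: s →
    N.word s '' V ∩ N.word t '' V = ∅ := by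
  intro s
  induction s with
  | nil => intro t h _; exact absurd (List.nil_prefix) h
  | cons a s ih =>
      intro t hst hts
      cases t with
      | nil => exact absurd (List.nil_prefix) hts
      | cons b t' =>
          by_cases hab : a = b
          · subst hab
            have h1 : ¬ s <+: t' := fun h => hst (List.cons_prefix_cons.2 ⟨rfl, h⟩)
            have h2 : ¬ t' <+: s := fun h => hts (List.cons_prefix_cons.2 ⟨rfl, h⟩)
            rw [word_cons_image, word_cons_image, ← Set.image_inter (N.f a).injective, ih t' h1 h2,
              Set.image_empty]
          · apply Set.eq_empty_of_subset_empty
            have h1 : N.word (a :: s) '' V ⊆ N.f a '' V := by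
              intro y ⟨x, hx, hxy⟩
              rw [← hxy, word_apply_cons]
              exact ⟨_, wordV_subset N V hVsub s ⟨x, hx, rfl⟩, rfl⟩
            have h2 : N.word (b :: t') '' V ⊆ N.f b '' V := by
              intro y ⟨x, hx, hxy⟩
              rw [← hxy, word_apply_cons]
              exact ⟨_, wordV_subset N V hVsub t' ⟨x, hx, rfl⟩, rfl⟩
            rw [← hVdisj a b hab]
            exact Set.inter_subset_inter h1 h2

include hc0 hcd in
lemma word_ball (σ : List (Fin N.n)) (a : Euc d) (t : ℝ) :
    N.word σ '' Metric.ball a t = Metric.ball (N.word σ a) (cw N c σ * t) := by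
  ext y
  constructor
  · rintro ⟨u, hu, rfl⟩
    rw [Metric.mem_ball] at hu ⊢
    rw [dist_word N c hcd]
    exact (mul_lt_mul_iff_right₀ (cw_pos N c hc0 σ)).2 hu
  · intro hy
    rw [Metric.mem_ball] at hy
    refine ⟨(N.word σ).symm y, ?_, by simp⟩
    rw [Metric.mem_ball]
    have : dist (N.word σ ((N.word σ).symm y)) (N.word σ a) = cw N c σ * dist ((N.word σ).symm y) a :=
      dist_word N c hcd σ _ _
    rw [Homeomorph.apply_symm_apply] at this
    have hcw := cw_pos N c hc0 σ
    nlinarith [hy, this]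

open MeasureTheory in
include hc0 hcd hcmin hcmin0 hVne hVo hVsub hVdisj in
/-- The packing bound: there are at most `K` pairwise incomparable words of comparable
scale whose copies all contain a common point. -/
lemma pack : ∃ K : ℕ, ∀ (x : Euc d) (r : ℝ), 0 < r →
    ∀ S : Finset (List (Fin N.n)),
    (∀ σ ∈ S, x ∈ N.copy σ ∧ r * cmin ≤ cw N c σ ∧ cw N c σ ≤ r) →
    (∀ σ ∈ S, ∀ τ ∈ S, σ ≠ τ → ¬ σ <+: τ) →
    S.card ≤ K := by
  classical
  obtain ⟨v₀, hv₀⟩ := hVne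
  obtain ⟨ρ, hρ0, hρ⟩ := Metric.isOpen_iff.1 hVo v₀ hv₀
  obtain ⟨R, hR⟩ := N.Fcpt.isBounded.subset_closedBall v₀
  set Δ : ℝ := max R 0 + ρ with hΔdef
  have hΔ0 : 0 < Δ := by positivity
  have hRΔ : ∀ a ∈ N.F, dist a v₀ ≤ Δ := by
    intro a ha
    have := hR ha
    rw [Metric.mem_closedBall] at this
    have : dist a v₀ ≤ max R 0 := this.trans (le_max_left _ _)
    linarith
  refine ⟨Nat.ceil ((Δ + ρ) ^ d / (cmin * ρ) ^ d), ?_⟩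
  intro x r hr S hS hinc
  -- the small balls
  set bl : List (Fin N.n) → Set (Euc d) := fun σ => Metric.ball (N.word σ v₀) (cw N c σ * ρ)
    with hbl
  have hblsub : ∀ σ ∈ S, bl σ ⊆ N.word σ '' V := by
    intro σ hσ
    rw [hbl]
    simp only
    rw [← word_ball N c hc0 hcd]
    exact Set.image_mono hρ
  have hdisjoint : (S : Set (List (Fin N.n))).PairwiseDisjoint bl := by
    intro σ hσ τ hτ hne
    refine Set.disjoint_of_subset (hblsub σ hσ) (hblsub τ hτ) ?_
    rw [Set.disjoint_iff_inter_eq_empty]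
    exact incomp_disjoint N V hVsub hVdisj σ τ (hinc σ hσ τ hτ hne)
      (fun h => hinc τ hτ σ hσ (Ne.symm hne) h)
  have hbig : ∀ σ ∈ S, bl σ ⊆ Metric.ball x (r * (Δ + ρ)) := by
    intro σ hσ y hy
    obtain ⟨hx, hlo, hhi⟩ := hS σ hσ
    obtain ⟨x', hx', hxx'⟩ := hx
    rw [Metric.mem_ball] at hy ⊢
    have h1 : dist (N.word σ v₀) x = cw N c σ * dist v₀ x' := by
      rw [← hxx']; exact dist_word N c hcd σ v₀ x'
    have h2 : dist v₀ x' ≤ Δ := by rw [dist_comm]; exact hRΔ x' hx'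
    have hcw0 : 0 < cw N c σ := cw_pos N c hc0 σ
    calc dist y x ≤ dist y (N.word σ v₀) + dist (N.word σ v₀) x := dist_triangle _ _ _
      _ < cw N c σ * ρ + cw N c σ * Δ := by
          apply add_lt_add_of_lt_of_le hy
          rw [h1]
          exact mul_le_mul_of_nonneg_left h2 hcw0.le
      _ ≤ r * ρ + r * Δ := by
          have := mul_le_mul_of_nonneg_right hhi hρ0.le
          have := mul_le_mul_of_nonneg_right hhi hΔ0.le
          nlinarith
      _ = r * (Δ + ρ) := by ring
  -- measure counting
  set B : ENNReal := volume (Metric.ball (0 : Euc d) 1) with hBdef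
  have hB0 : 0 < B := measure_ball_pos _ _ one_pos
  have hBtop : B < ⊤ := measure_ball_lt_top
  have hfr : Module.finrank ℝ (Euc d) = d := finrank_euclideanSpace_fin
  have hblvol : ∀ σ ∈ S, ENNReal.ofReal ((r * cmin * ρ) ^ d) * B ≤ volume (bl σ) := by
    intro σ hσ
    obtain ⟨hx, hlo, hhi⟩ := hS σ hσ
    have hcw0 : 0 < cw N c σ := cw_pos N c hc0 σ
    rw [hbl]
    simp only
    rw [Measure.addHaar_ball_of_pos _ _ (by positivity), hfr]
    apply mul_le_mul_left
    apply ENNReal.ofReal_le_ofReal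
    apply pow_le_pow_left₀ (by positivity)
    exact mul_le_mul_of_nonneg_right hlo hρ0.le
  have hbigvol : volume (Metric.ball x (r * (Δ + ρ))) =
      ENNReal.ofReal ((r * (Δ + ρ)) ^ d) * B := by
    rw [Measure.addHaar_ball_of_pos _ _ (by positivity), hfr]
  have hunion : volume (⋃ σ ∈ S, bl σ) = ∑ σ ∈ S, volume (bl σ) :=
    measure_biUnion_finset hdisjoint (fun σ _ => measurableSet_ball)
  have hle : ∑ σ ∈ S, volume (bl σ) ≤ ENNReal.ofReal ((r * (Δ + ρ)) ^ d) * B := by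
    rw [← hunion, ← hbigvol]
    apply measure_mono
    exact Set.iUnion₂_subset hbig
  have hcard : (S.card : ENNReal) * (ENNReal.ofReal ((r * cmin * ρ) ^ d) * B) ≤
      ∑ σ ∈ S, volume (bl σ) := by
    have := Finset.card_nsmul_le_sum S (fun σ => volume (bl σ))
      (ENNReal.ofReal ((r * cmin * ρ) ^ d) * B) hblvol
    rwa [nsmul_eq_mul] at this
  have hkey : (S.card : ENNReal) * ENNReal.ofReal ((r * cmin * ρ) ^ d) ≤
      ENNReal.ofReal ((r * (Δ + ρ)) ^ d) := by
    have h := hcard.trans hle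
    rw [← mul_assoc] at h
    exact (ENNReal.mul_le_mul_iff_left hB0.ne' hBtop.ne).1 h
  -- convert to reals
  have hreal : (S.card : ℝ) * (r * cmin * ρ) ^ d ≤ (r * (Δ + ρ)) ^ d := by
    have h1 : ENNReal.ofReal ((S.card : ℝ) * (r * cmin * ρ) ^ d) ≤
        ENNReal.ofReal ((r * (Δ + ρ)) ^ d) := by
      rw [ENNReal.ofReal_mul (by positivity)]
      rw [show ENNReal.ofReal (S.card : ℝ) = (S.card : ENNReal) by
        rw [ENNReal.ofReal_natCast]]
      exact hkey
    exact (ENNReal.ofReal_le_ofReal_iff (by positivity)).1 h1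
  have hratio : (S.card : ℝ) ≤ (Δ + ρ) ^ d / (cmin * ρ) ^ d := by
    have hpos : (0:ℝ) < (r * cmin * ρ) ^ d := by positivity
    rw [le_div_iff₀ (by positivity)]
    have hexp : (r * (Δ + ρ)) ^ d = r ^ d * (Δ + ρ) ^ d := mul_pow r _ d
    have hexp2 : (r * cmin * ρ) ^ d = r ^ d * (cmin * ρ) ^ d := by
      rw [mul_assoc, mul_pow]
    rw [hexp, hexp2] at hreal
    have hr2 : (0:ℝ) < r ^ d := by positivity
    nlinarith
  exact_mod_cast hratio.trans (Nat.le_ceil _)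

end OSCsec

end Necklace

namespace Necklace

section Count

variable {d : ℕ} (N : Necklace d)
variable (c : Fin N.n → ℝ) (hc0 : ∀ k, 0 < c k)
  (hcd : ∀ k x y, dist (N.f k x) (N.f k y) = c k * dist x y)
variable (cmin cmax : ℝ) (hcmin : ∀ k, cmin ≤ c k) (hcmin0 : 0 < cmin)
  (hcmax : ∀ k, c k ≤ cmax) (hcmax1 : cmax < 1)
variable (V : Set (Euc d)) (hVne : V.Nonempty) (hVo : IsOpen V)
  (hVsub : ∀ k, N.f k '' V ⊆ V)
  (hVdisj : ∀ j k : Fin N.n, j ≠ k → N.f j '' V ∩ N.f k '' V = ∅)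

lemma exists_xchild (x : Euc d) {κ : List (Fin N.n)} (h : x ∈ N.copy κ) :
    ∃ j, x ∈ N.copy (κ ++ [j]) := by
  rw [copy_eq_iUnion] at h
  exact Set.mem_iUnion.1 h

include hc0 hcmin hcmin0 hcmax hcmax1 in
lemma ext_exists (x : Euc d) {r : ℝ} (hr : 0 < r) :
    ∀ (σ : List (Fin N.n)), x ∈ N.copy σ → r ≤ N.cw c σ →
    ∃ τ, σ <+: τ ∧ x ∈ N.copy τ ∧ r * cmin ≤ N.cw c τ ∧ N.cw c τ ≤ r := by
  have hcmax0 : 0 < cmax := by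
    have hk0 : (0:ℕ) < N.n := by have := N.hn; omega
    exact lt_of_lt_of_le (hc0 ⟨0, hk0⟩) (hcmax ⟨0, hk0⟩)
  have main : ∀ (t : ℕ) (σ : List (Fin N.n)), x ∈ N.copy σ → r ≤ N.cw c σ →
      N.cw c σ * cmax ^ t ≤ r →
      ∃ τ, σ <+: τ ∧ x ∈ N.copy τ ∧ r * cmin ≤ N.cw c τ ∧ N.cw c τ ≤ r := by
    intro t
    induction t with
    | zero =>
        intro σ hx hlo hhi
        rw [pow_zero, mul_one] at hhi
        obtain ⟨j, hj⟩ := exists_xchild N x hx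
        refine ⟨σ ++ [j], ⟨[j], rfl⟩, hj, ?_, ?_⟩
        · rw [cw_append]
          have h1 : N.cw c [j] = c j := by rw [Necklace.cw]; simp
          rw [h1]
          calc r * cmin ≤ N.cw c σ * cmin := mul_le_mul_of_nonneg_right hlo hcmin0.le
            _ ≤ N.cw c σ * c j := mul_le_mul_of_nonneg_left (hcmin j)
                (cw_pos N c hc0 σ).le
        · rw [cw_append]
          have h1 : N.cw c [j] = c j := by rw [Necklace.cw]; simp
          rw [h1]
          calc N.cw c σ * c j ≤ N.cw c σ * 1 := by
                have := (hcmax j).trans hcmax1.le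
                exact mul_le_mul_of_nonneg_left this (cw_pos N c hc0 σ).le
            _ = N.cw c σ := mul_one _
            _ ≤ r := hhi
    | succ t ih =>
        intro σ hx hlo hhi
        by_cases hσr : N.cw c σ ≤ r
        · obtain ⟨j, hj⟩ := exists_xchild N x hx
          refine ⟨σ ++ [j], ⟨[j], rfl⟩, hj, ?_, ?_⟩
          · rw [cw_append]
            have h1 : N.cw c [j] = c j := by rw [Necklace.cw]; simp
            rw [h1]
            calc r * cmin ≤ N.cw c σ * cmin := mul_le_mul_of_nonneg_right hlo hcmin0.le
              _ ≤ N.cw c σ * c j := mul_le_mul_of_nonneg_left (hcmin j)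
                  (cw_pos N c hc0 σ).le
          · rw [cw_append]
            have h1 : N.cw c [j] = c j := by rw [Necklace.cw]; simp
            rw [h1]
            calc N.cw c σ * c j ≤ N.cw c σ * 1 := by
                  have := (hcmax j).trans hcmax1.le
                  exact mul_le_mul_of_nonneg_left this (cw_pos N c hc0 σ).le
              _ = N.cw c σ := mul_one _
              _ ≤ r := hσr
        · push_neg at hσr
          obtain ⟨j, hj⟩ := exists_xchild N x hx
          have hcwj : N.cw c (σ ++ [j]) = N.cw c σ * c j := by
            rw [cw_append]
            congr 1
            rw [Necklace.cw]; simp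
          by_cases hjr : r ≤ N.cw c (σ ++ [j])
          · have hstep : N.cw c (σ ++ [j]) * cmax ^ t ≤ r := by
              rw [hcwj]
              calc N.cw c σ * c j * cmax ^ t ≤ N.cw c σ * cmax * cmax ^ t := by
                    apply mul_le_mul_of_nonneg_right _ (pow_nonneg hcmax0.le t)
                    exact mul_le_mul_of_nonneg_left (hcmax j) (cw_pos N c hc0 σ).le
                _ = N.cw c σ * cmax ^ (t + 1) := by ring
                _ ≤ r := hhi
            obtain ⟨τ, hpre, hτ⟩ := ih (σ ++ [j]) hj hjr hstep
            exact ⟨τ, (List.prefix_append σ [j]).trans hpre, hτ⟩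
          · push_neg at hjr
            refine ⟨σ ++ [j], ⟨[j], rfl⟩, hj, ?_, hjr.le⟩
            rw [hcwj]
            calc r * cmin ≤ N.cw c σ * cmin := mul_le_mul_of_nonneg_right hσr.le hcmin0.le
              _ ≤ N.cw c σ * c j := mul_le_mul_of_nonneg_left (hcmin j)
                  (cw_pos N c hc0 σ).le
  intro σ hx hlo
  have hcw := cw_pos N c hc0 σ
  obtain ⟨t, ht⟩ := exists_pow_lt_of_lt_one (show (0:ℝ) < r / N.cw c σ by positivity) hcmax1
  apply main t σ hx hlo
  calc N.cw c σ * cmax ^ t ≤ N.cw c σ * (r / N.cw c σ) :=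
        mul_le_mul_of_nonneg_left ht.le hcw.le
    _ = r := by field_simp

open scoped Classical in
include hc0 hcd hcmin hcmin0 hcmax hcmax1 hVne hVo hVsub hVdisj in
/-- Uniform bounded ramification: a single bound for the number of `m`-level words whose
copies contain any given point. -/
lemma ram_bound : ∃ K : ℕ, ∀ (x : Euc d) (m : ℕ),
    {σ : List (Fin N.n) | σ.length = m ∧ x ∈ N.copy σ}.ncard ≤ K := by
  obtain ⟨K, hK⟩ := pack N c hc0 hcd cmin hcmin hcmin0 V hVne hVo hVsub hVdisj
  refine ⟨K, ?_⟩
  intro x m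
  have hfin : {σ : List (Fin N.n) | σ.length = m ∧ x ∈ N.copy σ}.Finite :=
    (List.finite_length_eq _ m).subset (fun σ hσ => hσ.1)
  set r : ℝ := cmin ^ m / 2 with hrdef
  have hr0 : 0 < r := by positivity
  have hrle : ∀ σ : List (Fin N.n), σ.length = m → r ≤ N.cw c σ := by
    intro σ hlen
    have := pow_le_cw N c cmin hcmin hcmin0 σ
    rw [hlen] at this
    have h2 : (0:ℝ) < cmin ^ m := by positivity
    rw [hrdef]
    linarith
  set g : List (Fin N.n) → List (Fin N.n) := fun σ =>
    if h : σ.length = m ∧ x ∈ N.copy σ then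
      (ext_exists N c hc0 cmin cmax hcmin hcmin0 hcmax hcmax1 x hr0 σ h.2
        (hrle σ h.1)).choose
    else σ with hgdef
  have hgspec : ∀ σ : List (Fin N.n), σ.length = m → x ∈ N.copy σ →
      σ <+: g σ ∧ x ∈ N.copy (g σ) ∧ r * cmin ≤ N.cw c (g σ) ∧ N.cw c (g σ) ≤ r := by
    intro σ h1 h2
    have := (ext_exists N c hc0 cmin cmax hcmin hcmin0 hcmax hcmax1 x hr0 σ h2
        (hrle σ h1)).choose_spec
    rw [hgdef]
    simp only [dif_pos (And.intro h1 h2)]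
    exact this
  set S0 : Finset (List (Fin N.n)) := hfin.toFinset with hS0
  have hmemS0 : ∀ σ, σ ∈ S0 ↔ (σ.length = m ∧ x ∈ N.copy σ) := by
    intro σ; rw [hS0, Set.Finite.mem_toFinset]; rfl
  set S : Finset (List (Fin N.n)) := S0.image g with hSdef
  have hginj : Set.InjOn g S0 := by
    intro σ hσ τ hτ hgeq
    rw [Finset.mem_coe, hmemS0] at hσ hτ
    have h1 : σ <+: g τ := hgeq ▸ (hgspec σ hσ.1 hσ.2).1
    have h2 : τ <+: g τ := (hgspec τ hτ.1 hτ.2).1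
    have hl : σ.length = τ.length := by rw [hσ.1, hτ.1]
    exact (List.prefix_of_prefix_length_le h1 h2 hl.le).eq_of_length hl
  have hcard : {σ : List (Fin N.n) | σ.length = m ∧ x ∈ N.copy σ}.ncard = S0.card := by
    rw [hS0, Set.ncard_eq_toFinset_card _ hfin]
  rw [hcard, ← Finset.card_image_of_injOn hginj]
  apply hK x r hr0 S
  · intro τ hτ
    rw [hSdef, Finset.mem_image] at hτ
    obtain ⟨σ, hσ, rfl⟩ := hτ
    rw [hmemS0] at hσ
    obtain ⟨-, hx', h3, h4⟩ := hgspec σ hσ.1 hσ.2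
    exact ⟨hx', h3, h4⟩
  · intro τ hτ τ' hτ' hne hpre
    rw [hSdef, Finset.mem_image] at hτ hτ'
    obtain ⟨σ, hσ, rfl⟩ := hτ
    obtain ⟨σ', hσ', rfl⟩ := hτ'
    rw [hmemS0] at hσ hσ'
    have h1 : σ <+: g σ' := ((hgspec σ hσ.1 hσ.2).1).trans hpre
    have h2 : σ' <+: g σ' := (hgspec σ' hσ'.1 hσ'.2).1
    have hl : σ.length = σ'.length := by rw [hσ.1, hσ'.1]
    have : σ = σ' := (List.prefix_of_prefix_length_le h1 h2 hl.le).eq_of_length hl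
    exact hne (by rw [this])

end Count

end Necklace

namespace Necklace

/-- `κ` is a split for `x`: two distinct children copies of `κ` contain `x`. -/
def IsSplit {d : ℕ} (N : Necklace d) (x : Euc d) (κ : List (Fin N.n)) : Prop :=
  x ∈ N.copy κ ∧ ∃ j j' : Fin N.n, j ≠ j' ∧ x ∈ N.copy (κ ++ [j]) ∧ x ∈ N.copy (κ ++ [j'])

section Splits

variable {d : ℕ} (N : Necklace d)
variable (K : ℕ) (hK : ∀ (x : Euc d) (m : ℕ),
    {σ : List (Fin N.n) | σ.length = m ∧ x ∈ N.copy σ}.ncard ≤ K)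

lemma xword_exists (x : Euc d) (hx : x ∈ N.F) (m : ℕ) :
    ∃ σ : List (Fin N.n), σ.length = m ∧ x ∈ N.copy σ := by
  induction m with
  | zero => exact ⟨[], rfl, by rwa [copy_nil]⟩
  | succ m ih =>
      obtain ⟨σ, hlen, hσ⟩ := ih
      obtain ⟨j, hj⟩ := exists_xchild N x hσ
      exact ⟨σ ++ [j], by simp [hlen], hj⟩

include hK in
lemma splits_finite (x : Euc d) (hx : x ∈ N.F) : {κ | N.IsSplit x κ}.Finite := by
  classical
  by_contra hinf
  rw [← Set.not_infinite, not_not] at hinf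
  obtain ⟨T, hTsub, hTcard⟩ := hinf.exists_subset_card_eq (K + 1)
  set M : ℕ := T.sup List.length + 1 with hM
  have hTlen : ∀ κ ∈ T, κ.length < M := by
    intro κ hκ
    have := Finset.le_sup (f := List.length) hκ
    omega
  have hfin : ∀ m : ℕ, {σ : List (Fin N.n) | σ.length = m ∧ x ∈ N.copy σ}.Finite :=
    fun m => (List.finite_length_eq _ m).subset (fun σ hσ => hσ.1)
  set Wm : ℕ → Finset (List (Fin N.n)) := fun m => (hfin m).toFinset with hWm
  have hmemW : ∀ m σ, σ ∈ Wm m ↔ (σ.length = m ∧ x ∈ N.copy σ) := by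
    intro m σ; rw [hWm]; simp only [Set.Finite.mem_toFinset]; rfl
  have hWcard : ∀ m, (Wm m).card ≤ K := by
    intro m
    have := hK x m
    rwa [Set.ncard_eq_toFinset_card _ (hfin m)] at this
  -- fiber inequality
  have FIB : ∀ m : ℕ, (Wm m).card + (T.filter (fun κ => κ.length = m)).card
      ≤ (Wm (m+1)).card := by
    intro m
    set Tf := T.filter (fun κ => κ.length = m) with hTf
    have hTfW : Tf ⊆ Wm m := by
      intro κ hκ
      rw [hTf, Finset.mem_filter] at hκ
      rw [hmemW]
      exact ⟨hκ.2, (hTsub hκ.1).1⟩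
    have hmap : ∀ σ ∈ Wm (m+1), σ.dropLast ∈ Wm m := by
      intro σ hσ
      rw [hmemW] at hσ ⊢
      have hne : σ ≠ [] := by intro h; rw [h] at hσ; simp at hσ
      constructor
      · rw [List.length_dropLast, hσ.1]; omega
      · have hpre : σ.dropLast <+: σ := ⟨[σ.getLast hne], List.dropLast_append_getLast hne⟩
        exact copy_prefix_subset N hpre hσ.2
    have hsum := Finset.card_eq_sum_card_fiberwise hmap
    have hbound : ∀ κ ∈ Wm m,
        1 + (if κ ∈ Tf then 1 else 0) ≤ ((Wm (m+1)).filter (fun σ => σ.dropLast = κ)).card := by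
      intro κ hκ
      rw [hmemW] at hκ
      by_cases hsp : κ ∈ Tf
      · simp only [if_pos hsp]
        obtain ⟨-, j, j', hjj, hj, hj'⟩ := hTsub (Finset.mem_of_mem_filter κ hsp)
        have hm1 : κ ++ [j] ∈ (Wm (m+1)).filter (fun σ => σ.dropLast = κ) := by
          rw [Finset.mem_filter, hmemW]
          exact ⟨⟨by simp [hκ.1], hj⟩, by simp⟩
        have hm2 : κ ++ [j'] ∈ (Wm (m+1)).filter (fun σ => σ.dropLast = κ) := by
          rw [Finset.mem_filter, hmemW]
          exact ⟨⟨by simp [hκ.1], hj'⟩, by simp⟩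
        have hne : κ ++ [j] ≠ κ ++ [j'] := by
          intro h
          exact hjj (by simpa using List.append_cancel_left h)
        have := Finset.one_lt_card.2 ⟨_, hm1, _, hm2, hne⟩
        omega
      · simp only [if_neg hsp, add_zero]
        obtain ⟨j, hj⟩ := exists_xchild N x hκ.2
        have hmem : κ ++ [j] ∈ (Wm (m+1)).filter (fun σ => σ.dropLast = κ) := by
          rw [Finset.mem_filter, hmemW]
          exact ⟨⟨by simp [hκ.1], hj⟩, by simp⟩
        have := Finset.card_pos.2 ⟨_, hmem⟩
        omega
    have : ∑ κ ∈ Wm m, (1 + (if κ ∈ Tf then 1 else 0)) ≤ (Wm (m+1)).card := by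
      rw [hsum]
      exact Finset.sum_le_sum hbound
    calc (Wm m).card + Tf.card
        = ∑ κ ∈ Wm m, 1 + ∑ κ ∈ Wm m, (if κ ∈ Tf then 1 else 0) := by
          rw [Finset.sum_const, smul_eq_mul, mul_one]
          congr 1
          rw [Finset.sum_ite_mem, Finset.inter_eq_right.2 hTfW, Finset.sum_const,
            smul_eq_mul, mul_one]
      _ = ∑ κ ∈ Wm m, (1 + (if κ ∈ Tf then 1 else 0)) := by rw [Finset.sum_add_distrib]
      _ ≤ (Wm (m+1)).card := this
  -- accumulate
  have ACC : ∀ M' : ℕ, (Wm 0).card + ∑ m ∈ Finset.range M',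
      (T.filter (fun κ => κ.length = m)).card ≤ (Wm M').card := by
    intro M'
    induction M' with
    | zero => simp
    | succ M' ih =>
        rw [Finset.sum_range_succ]
        have := FIB M'
        omega
  have hTsum : ∑ m ∈ Finset.range M, (T.filter (fun κ => κ.length = m)).card = T.card :=
    (Finset.card_eq_sum_card_fiberwise
      (fun κ hκ => Finset.mem_range.2 (hTlen κ hκ))).symm
  have h0 : 1 ≤ (Wm 0).card := by
    have : ([] : List (Fin N.n)) ∈ Wm 0 := by
      rw [hmemW]
      exact ⟨rfl, by rwa [copy_nil]⟩
    have := Finset.card_pos.2 ⟨_, this⟩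
    omega
  have := ACC M
  rw [hTsum, hTcard] at this
  have := hWcard M
  omega

end Splits

end Necklace

namespace Necklace

section Zne

variable {d : ℕ} (N : Necklace d)

lemma one_val : (N.one).val = 1 := rfl

lemma add_one_ne (a : Fin N.n) : a + N.one ≠ a := by
  intro h
  have h2 := add_eq_left.1 (by rwa [add_comm] at h)
  have : (N.one).val = (0 : Fin N.n).val := by rw [h2]
  rw [one_val, Fin.val_zero] at this
  exact one_ne_zero this

include N in
lemma fin3_adj (h3 : N.n = 3) {a b : Fin N.n} (hne : a ≠ b) :
    b = a + N.one ∨ a = b + N.one := by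
  have h1 := a.isLt
  have h2 := b.isLt
  have hne' : a.val ≠ b.val := fun h => hne (Fin.ext h)
  have hval : b.val = (a.val + 1) % 3 ∨ a.val = (b.val + 1) % 3 := by omega
  have hmr : ∀ k : ℕ, k % N.n = k % 3 := fun k => by congr 1
  rcases hval with h | h
  · left; apply Fin.ext; rw [Fin.val_add, one_val, hmr]; exact h
  · right; apply Fin.ext; rw [Fin.val_add, one_val, hmr]; exact h

lemma stable_pair (hstable : N.Stable) (k : Fin N.n) :
    ∃ jA jB : Fin N.n, N.f k '' (N.f jA '' N.F) ≠ N.f k '' (N.f jB '' N.F) ∧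
      (N.f k '' (N.f jA '' N.F) ∩ N.bdry k).Nonempty ∧
      (N.f k '' (N.f jB '' N.F) ∩ N.bdry k).Nonempty := by
  classical
  have h2 := hstable k
  set Sk := {A : Set (Euc d) |
      (∃ j0 : Fin N.n, A = N.f k '' (N.f j0 '' N.F)) ∧ (A ∩ N.bdry k).Nonempty} with hSk
  have hSfin : Sk.Finite := by
    apply Set.Finite.subset (Set.finite_range (fun j0 : Fin N.n => N.f k '' (N.f j0 '' N.F)))
    rintro A ⟨⟨j0, rfl⟩, -⟩
    exact ⟨j0, rfl⟩
  have h1lt : 1 < Sk.ncard := lt_of_lt_of_le one_lt_two h2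
  rw [Set.one_lt_ncard hSfin] at h1lt
  obtain ⟨A, hA, B, hB, hAB⟩ := h1lt
  obtain ⟨⟨jA, rfl⟩, hAne⟩ := hA
  obtain ⟨⟨jB, rfl⟩, hBne⟩ := hB
  exact ⟨jA, jB, hAB, hAne, hBne⟩

/-- Non-degeneracy: adjacent main nodes are distinct. -/
lemma zne (hstable : N.Stable)
    (K : ℕ) (hK : ∀ (x : Euc d) (m : ℕ),
      {σ : List (Fin N.n) | σ.length = m ∧ x ∈ N.copy σ}.ncard ≤ K)
    (j : Fin N.n) : N.z j ≠ N.z (j + N.one) := by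
  classical
  intro heq
  set q := N.z j with hqdef
  by_cases h4 : 4 ≤ N.n
  · -- easy case: q ∈ F_j ∩ F_{j+2}, contradicting hdisj
    have h1 : q ∈ N.f j '' N.F := z_mem_left N j
    have h2 : q ∈ N.f (j + N.one + N.one) '' N.F := by
      rw [heq]
      exact z_mem_right N (j + N.one)
    have hone2 : N.one + N.one ≠ (0 : Fin N.n) := by
      intro h
      have := congrArg Fin.val h
      rw [Fin.val_add, one_val, Fin.val_zero, Nat.mod_eq_of_lt (by omega)] at this
      omega
    have hone3 : N.one + N.one + N.one ≠ (0 : Fin N.n) := by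
      intro h
      have := congrArg Fin.val h
      rw [Fin.val_add, Fin.val_add, one_val, Fin.val_zero] at this
      rw [Nat.mod_eq_of_lt (show 1 + 1 < N.n by omega)] at this
      rw [Nat.mod_eq_of_lt (show 1 + 1 + 1 < N.n by omega)] at this
      omega
    have hne1 : j ≠ j + N.one + N.one := by
      intro h
      rw [add_assoc] at h
      exact hone2 (add_left_cancel (a := j) (by rw [add_zero]; exact h)).symm
    have hne2 : j ≠ j + N.one + N.one + N.one := by
      intro h
      rw [add_assoc, add_assoc, ← add_assoc (N.one)] at h
      exact hone3 (add_left_cancel (a := j) (by rw [add_zero]; exact h)).symm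
    have hne3 : j + N.one + N.one ≠ j + N.one := fun h => add_one_ne N (j + N.one) h
    have hdisj := N.hdisj j (j + N.one + N.one) hne1 hne2 hne3
    have : q ∈ (∅ : Set (Euc d)) := by
      rw [← hdisj]
      exact ⟨h1, h2⟩
    exact this
  · -- n = 3
    have h3 : N.n = 3 := by have := N.hn; omega
    have hq2 : N.z (j + N.one) = q := heq.symm
    have hval3 : ∀ a : Fin N.n, a + N.one + N.one + N.one = a := by
      intro a
      apply Fin.ext
      rw [Fin.val_add, Fin.val_add, Fin.val_add, one_val]
      have hlt := a.isLt
      have hmr : ∀ k : ℕ, k % N.n = k % 3 := fun k => by congr 1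
      rw [hmr, hmr, hmr]
      omega
    have hq3 : N.z (j + N.one + N.one) = q := by
      have hmem1 : q ∈ N.f (j + N.one + N.one) '' N.F := by
        rw [← hq2]
        exact z_mem_right N (j + N.one)
      have hmem2 : q ∈ N.f (j + N.one + N.one + N.one) '' N.F := by
        rw [hval3 j]
        exact z_mem_left N j
      have := N.hz (j + N.one + N.one)
      have hq : q ∈ ({N.z (j + N.one + N.one)} : Set (Euc d)) := by
        rw [← this]
        exact ⟨hmem1, hmem2⟩
      exact (Set.mem_singleton_iff.1 hq).symm
    have hallz : ∀ k : Fin N.n, N.z k = q := by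
      intro k
      have hk : k = j + (k - j) := by rw [add_comm, sub_add_cancel]
      have hlt := (k - j).isLt
      have hcase : (k - j).val = 0 ∨ (k - j).val = 1 ∨ (k - j).val = 2 := by omega
      rcases hcase with h | h | h
      · have : k - j = 0 := Fin.ext (by rw [h, Fin.val_zero])
        rw [this, add_zero] at hk
        rw [hk]
      · have : k - j = N.one := Fin.ext (by rw [h, one_val])
        rw [this] at hk
        rw [hk]
        exact hq2
      · have : k - j = N.one + N.one := by
          apply Fin.ext
          have hmr : ∀ k : ℕ, k % N.n = k % 3 := fun k => by congr 1
          rw [Fin.val_add, one_val, h, hmr]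
        rw [this, ← add_assoc] at hk
        rw [hk]
        exact hq3
    have hfix : ∀ k : Fin N.n, N.f k q = q := by
      intro k
      have hb : N.bdry k = {q} := by
        rw [Necklace.bdry, hallz, hallz]
        exact Set.insert_eq_self.2 rfl
      obtain ⟨jA, jB, hABne, hAne, hBne⟩ := stable_pair N hstable k
      rw [hb] at hAne hBne
      have hqA : q ∈ N.f k '' (N.f jA '' N.F) := by
        obtain ⟨y, hy1, hy2⟩ := hAne
        rwa [Set.mem_singleton_iff.1 hy2] at hy1
      have hqB : q ∈ N.f k '' (N.f jB '' N.F) := by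
        obtain ⟨y, hy1, hy2⟩ := hBne
        rwa [Set.mem_singleton_iff.1 hy2] at hy1
      have hjne : jA ≠ jB := by
        intro h; exact hABne (by rw [h])
      obtain ⟨wA, hwA, hwAq⟩ := hqA
      obtain ⟨wB, hwB, hwBq⟩ := hqB
      have hw : wA = wB := (N.f k).injective (hwAq.trans hwBq.symm)
      rw [hw] at hwA hwAq
      -- wB ∈ F_{jA} ∩ F_{jB}
      rcases fin3_adj N h3 hjne with hadj | hadj
      · have : wB ∈ N.f jA '' N.F ∩ N.f (jA + N.one) '' N.F := ⟨hwA, by rwa [← hadj]⟩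
        have hzA : N.f jA '' N.F ∩ N.f (jA + N.one) '' N.F = {N.z jA} := N.hz jA
        rw [hzA] at this
        have : wB = q := by rw [Set.mem_singleton_iff.1 this, hallz]
        rw [this] at hwAq
        exact hwAq
      · have : wB ∈ N.f jB '' N.F ∩ N.f (jB + N.one) '' N.F := ⟨hwB, by rwa [← hadj]⟩
        have hzB : N.f jB '' N.F ∩ N.f (jB + N.one) '' N.F = {N.z jB} := N.hz jB
        rw [hzB] at this
        have : wB = q := by rw [Set.mem_singleton_iff.1 this, hallz]
        rw [this] at hwAq
        exact hwAq
    have hql : ∀ σ : List (Fin N.n), q ∈ N.copy σ := by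
      intro σ
      induction σ with
      | nil => rw [copy_nil]; exact z_mem_F N j
      | cons a s ih => rw [copy_cons]; exact ⟨q, ih, hfix a⟩
    -- too many words of length K+1 contain q
    set m := K + 1 with hm
    set gg : ℕ → List (Fin N.n) := fun t =>
      List.replicate t (0 : Fin N.n) ++ List.replicate (m - t) (1 : Fin N.n) with hgg
    have h01 : (0 : Fin N.n) ≠ (1 : Fin N.n) := by
      intro h
      have := congrArg Fin.val h
      rw [Fin.val_zero, Fin.val_one'] at this
      rw [Nat.mod_eq_of_lt (by omega)] at this
      exact absurd this (by omega)
    have hcount : ∀ t, (gg t).count (0 : Fin N.n) = t := by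
      intro t
      rw [hgg]
      simp only [List.count_append, List.count_replicate]
      have h1 : ((0:Fin N.n) == 0) = true := by simp
      have h2 : ¬ (((1:Fin N.n) == 0) = true) := by simp [Ne.symm h01]
      rw [if_pos h1, if_neg h2]
      omega
    have hinj : Set.InjOn gg ↑(Finset.range (m + 1)) := by
      intro s hs t ht hst
      have := hcount s
      rw [hst, hcount t] at this
      omega
    have hsub : ↑((Finset.range (m + 1)).image gg) ⊆
        {σ : List (Fin N.n) | σ.length = m ∧ q ∈ N.copy σ} := by
      intro σ hσ
      rw [Finset.coe_image] at hσ
      obtain ⟨t, ht, rfl⟩ := hσ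
      rw [Finset.coe_range] at ht
      refine ⟨?_, hql _⟩
      rw [hgg]
      simp only [List.length_append, List.length_replicate]
      have : t < m + 1 := ht
      omega
    have hfin : {σ : List (Fin N.n) | σ.length = m ∧ q ∈ N.copy σ}.Finite :=
      (List.finite_length_eq _ m).subset (fun σ hσ => hσ.1)
    have hcard : ((Finset.range (m + 1)).image gg).card = m + 1 := by
      rw [Finset.card_image_of_injOn hinj, Finset.card_range]
    have hle := Set.ncard_le_ncard hsub hfin
    rw [Set.ncard_coe_finset, hcard] at hle
    have := hK q m
    omega

end Zne

end Necklace

namespace Necklace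

section Struct

variable {d : ℕ} (N : Necklace d)

lemma xchildren_adj (x : Euc d) (κ : List (Fin N.n)) {i j : Fin N.n} (hne : i ≠ j)
    (hi : x ∈ N.copy (κ ++ [i])) (hj : x ∈ N.copy (κ ++ [j])) :
    j = i + N.one ∨ i = j + N.one := by
  by_contra hcon
  push_neg at hcon
  have := child_disj N κ hne (fun h => hcon.2 h) (fun h => hcon.1 h)
  have : x ∈ (∅ : Set (Euc d)) := this ▸ ⟨hi, hj⟩
  exact this

lemma node_of_two (x : Euc d) (κ : List (Fin N.n)) (i : Fin N.n)
    (hi : x ∈ N.copy (κ ++ [i])) (hi' : x ∈ N.copy (κ ++ [i + N.one])) :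
    x = N.word κ (N.z i) := by
  have := child_inter N κ i
  have hx : x ∈ ({N.word κ (N.z i)} : Set (Euc d)) := this ▸ ⟨hi, hi'⟩
  exact hx

lemma cast_one_eq_one : ((1 : ℕ) : Fin N.n) = N.one := by
  apply Fin.ext
  rw [Fin.val_cast_of_lt (show 1 < N.n by have := N.hn; omega), one_val]

/-- Structure of the set of children of an `x`-copy containing `x`. -/
lemma xchildren_structure (hstable : N.Stable)
    (K : ℕ) (hK : ∀ (x : Euc d) (m : ℕ),
      {σ : List (Fin N.n) | σ.length = m ∧ x ∈ N.copy σ}.ncard ≤ K)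
    (x : Euc d) (κ : List (Fin N.n)) (hxκ : x ∈ N.copy κ) :
    ∃ i : Fin N.n, x ∈ N.copy (κ ++ [i]) ∧
      ∀ j : Fin N.n, x ∈ N.copy (κ ++ [j]) → j = i ∨ j = i + N.one := by
  obtain ⟨i₀, hi₀⟩ := exists_xchild N x hxκ
  by_cases hsec : ∃ j₀, j₀ ≠ i₀ ∧ x ∈ N.copy (κ ++ [j₀])
  · obtain ⟨j₀, hj₀ne, hj₀⟩ := hsec
    -- get an adjacent pair (i, i+1) of children containing x
    have hadj := xchildren_adj N x κ (Ne.symm hj₀ne) hi₀ hj₀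
    obtain ⟨i, hi, hi1⟩ : ∃ i, x ∈ N.copy (κ ++ [i]) ∧ x ∈ N.copy (κ ++ [i + N.one]) := by
      rcases hadj with h | h
      · exact ⟨i₀, hi₀, h ▸ hj₀⟩
      · exact ⟨j₀, hj₀, h ▸ hi₀⟩
    refine ⟨i, hi, ?_⟩
    intro j hj
    by_contra hcon
    push_neg at hcon
    obtain ⟨hji, hji1⟩ := hcon
    -- j is adjacent to both i and i+1
    have h1 := xchildren_adj N x κ (Ne.symm hji) hi hj
    have h2 := xchildren_adj N x κ (Ne.symm hji1) hi1 hj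
    have hij1 : i = j + N.one := by
      rcases h1 with h | h
      · exact absurd h hji1
      · exact h
    have hj2 : j = i + N.one + N.one := by
      rcases h2 with h | h
      · exact h
      · exfalso
        exact hji (add_right_cancel h).symm
    -- so i = i + 1+1+1, forcing n = 3
    have h30 : i = i + (N.one + N.one + N.one) := by
      conv_lhs => rw [hij1, hj2]
      ring
    have h3 : N.n = 3 := by
      by_contra hn3
      have h4 : 4 ≤ N.n := by have := N.hn; omega
      have h0 : N.one + N.one + N.one = 0 := by
        have := (left_eq_add).1 h30
        exact this
      have := congrArg Fin.val h0
      rw [Fin.val_add, Fin.val_add, one_val, Fin.val_zero] at this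
      rw [Nat.mod_eq_of_lt (show 1 + 1 < N.n by omega)] at this
      rw [Nat.mod_eq_of_lt (show 1 + 1 + 1 < N.n by omega)] at this
      omega
    -- n = 3 : x is both nodes, contradicting zne
    have hx1 : x = N.word κ (N.z i) := node_of_two N x κ i hi hi1
    have hx2 : x = N.word κ (N.z (i + N.one)) := by
      apply node_of_two N x κ (i + N.one) hi1
      rw [← hj2]
      exact hj
    have : N.z i = N.z (i + N.one) := by
      have := hx1.symm.trans hx2
      exact word_injective N κ this
    exact zne N hstable K hK i this
  · push_neg at hsec
    refine ⟨i₀, hi₀, ?_⟩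
    intro j hj
    by_contra hne
    push_neg at hne
    exact hsec j hne.1 hj
  
end Struct

end Necklace

namespace Necklace

section Desc

variable {d : ℕ} (N : Necklace d)
variable (c : Fin N.n → ℝ) (hc0 : ∀ k, 0 < c k)
  (hcd : ∀ k x y, dist (N.f k x) (N.f k y) = c k * dist x y)
variable (cmax : ℝ) (hcmax : ∀ k, c k ≤ cmax) (hcmax1 : cmax < 1)

include hc0 hcd hcmax hcmax1 in
/-- Descend from a copy containing both `x` and `b ≠ x` to a child copy containing `b`
but not `x`, inside a chain of `x`-copies. -/
lemma descend {x b : Euc d} (hne : b ≠ x) :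
    ∀ κ : List (Fin N.n), x ∈ N.copy κ → b ∈ N.copy κ →
    ∃ (lam : List (Fin N.n)) (u : Fin N.n), κ <+: lam ∧ x ∈ N.copy lam ∧
      b ∈ N.copy (lam ++ [u]) ∧ x ∉ N.copy (lam ++ [u]) := by
  have hcmax0 : 0 < cmax := by
    have hk0 : (0:ℕ) < N.n := by have := N.hn; omega
    exact lt_of_lt_of_le (hc0 ⟨0, hk0⟩) (hcmax ⟨0, hk0⟩)
  have hD : 0 ≤ Metric.diam N.F := Metric.diam_nonneg
  have main : ∀ (t : ℕ) (κ : List (Fin N.n)), x ∈ N.copy κ → b ∈ N.copy κ →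
      N.cw c κ * cmax ^ t * (Metric.diam N.F + 1) < dist x b →
      ∃ (lam : List (Fin N.n)) (u : Fin N.n), κ <+: lam ∧ x ∈ N.copy lam ∧
        b ∈ N.copy (lam ++ [u]) ∧ x ∉ N.copy (lam ++ [u]) := by
    intro t
    induction t with
    | zero =>
        intro κ hx hb hlt
        exfalso
        have h1 : dist x b ≤ N.cw c κ * Metric.diam N.F :=
          dist_le_of_mem_copy N c hc0 hcd hx hb
        have hcw := cw_pos N c hc0 κ
        rw [pow_zero, mul_one] at hlt
        nlinarith
    | succ t ih =>
        intro κ hx hb hlt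
        obtain ⟨u, hu⟩ : ∃ u, b ∈ N.copy (κ ++ [u]) := by
          rw [copy_eq_iUnion] at hb
          exact Set.mem_iUnion.1 hb
        by_cases hxu : x ∈ N.copy (κ ++ [u])
        · have hcw : N.cw c (κ ++ [u]) ≤ N.cw c κ * cmax := by
            rw [cw_append]
            have h1 : N.cw c [u] = c u := by rw [Necklace.cw]; simp
            rw [h1]
            exact mul_le_mul_of_nonneg_left (hcmax u) (cw_pos N c hc0 κ).le
          have hstep : N.cw c (κ ++ [u]) * cmax ^ t * (Metric.diam N.F + 1) < dist x b := by
            calc N.cw c (κ ++ [u]) * cmax ^ t * (Metric.diam N.F + 1)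
                ≤ (N.cw c κ * cmax) * cmax ^ t * (Metric.diam N.F + 1) := by
                  apply mul_le_mul_of_nonneg_right _ (by positivity)
                  exact mul_le_mul_of_nonneg_right hcw (by positivity)
              _ = N.cw c κ * cmax ^ (t+1) * (Metric.diam N.F + 1) := by ring
              _ < dist x b := hlt
          obtain ⟨lam, u', hpre, h2, h3, h4⟩ := ih (κ ++ [u]) hxu hu hstep
          exact ⟨lam, u', (List.prefix_append κ [u]).trans hpre, h2, h3, h4⟩
        · exact ⟨κ, u, List.prefix_rfl, hx, hu, hxu⟩
  intro κ hx hb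
  have hdpos : 0 < dist x b := dist_pos.mpr (fun h => hne h.symm)
  have hcw := cw_pos N c hc0 κ
  obtain ⟨t, ht⟩ := exists_pow_lt_of_lt_one
    (show (0:ℝ) < dist x b / (N.cw c κ * (Metric.diam N.F + 1)) by positivity) hcmax1
  apply main t κ hx hb
  have h2 : N.cw c κ * (Metric.diam N.F + 1) > 0 := by positivity
  calc N.cw c κ * cmax ^ t * (Metric.diam N.F + 1)
      = cmax ^ t * (N.cw c κ * (Metric.diam N.F + 1)) := by ring
    _ < (dist x b / (N.cw c κ * (Metric.diam N.F + 1))) * (N.cw c κ * (Metric.diam N.F + 1)) :=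
        mul_lt_mul_of_pos_right ht h2
    _ = dist x b := by field_simp

end Desc

section Comp

variable {d : ℕ} (N : Necklace d)

/-- `y` lies in a child copy of `κ` avoiding `x`. -/
def Surv (x : Euc d) (κ : List (Fin N.n)) (y : Euc d) : Prop :=
  ∃ u : Fin N.n, x ∉ N.copy (κ ++ [u]) ∧ y ∈ N.copy (κ ++ [u])

variable (c : Fin N.n → ℝ) (hc0 : ∀ k, 0 < c k)
  (hcd : ∀ k x y, dist (N.f k x) (N.f k y) = c k * dist x y)
variable (cmax : ℝ) (hcmax : ∀ k, c k ≤ cmax) (hcmax1 : cmax < 1)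

include hc0 hcd hcmax hcmax1 in
lemma copy_connected (σ : List (Fin N.n)) : IsConnected (N.copy σ) :=
  (IsConnected.image ⟨N.Fne, F_isPreconnected N c hc0 hcd cmax hcmax hcmax1⟩
    _ (N.word σ).continuous.continuousOn)

include hc0 hcd hcmax hcmax1 in
/-- Points of a common avoiding copy lie in the same connected component of `F \ {x}`. -/
lemma conn_of_copy {x : Euc d} {τ : List (Fin N.n)} (hxτ : x ∉ N.copy τ) {y y' : Euc d}
    (hy : y ∈ N.copy τ) (hy' : y' ∈ N.copy τ) :
    y' ∈ connectedComponentIn (N.F \ {x}) y := by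
  have hsub : N.copy τ ⊆ N.F \ {x} := by
    intro p hp
    exact ⟨copy_subset_F N τ hp, fun hpx => hxτ (by rwa [Set.mem_singleton_iff.1 hpx] at hp)⟩
  exact (copy_connected N c hc0 hcd cmax hcmax hcmax1 τ).isPreconnected.subset_connectedComponentIn
    hy hsub hy'

lemma conn_trans {x : Euc d} {y y' y'' : Euc d}
    (h1 : y' ∈ connectedComponentIn (N.F \ {x}) y)
    (h2 : y'' ∈ connectedComponentIn (N.F \ {x}) y') :
    y'' ∈ connectedComponentIn (N.F \ {x}) y := by
  rwa [connectedComponentIn_eq h1]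

lemma conn_symm {x : Euc d} {y y' : Euc d}
    (h1 : y' ∈ connectedComponentIn (N.F \ {x}) y) :
    y ∈ connectedComponentIn (N.F \ {x}) y' := by
  have hy : y ∈ N.F \ {x} := connectedComponentIn_nonempty_iff.1 ⟨y', h1⟩
  have := mem_connectedComponentIn hy
  rwa [connectedComponentIn_eq h1] at this

end Comp

end Necklace

namespace Necklace

section SurvConn

variable {d : ℕ} (N : Necklace d)
variable (c : Fin N.n → ℝ) (hc0 : ∀ k, 0 < c k)
  (hcd : ∀ k x y, dist (N.f k x) (N.f k y) = c k * dist x y)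
variable (cmax : ℝ) (hcmax : ∀ k, c k ≤ cmax) (hcmax1 : cmax < 1)
variable (hstable : N.Stable)
variable (K : ℕ) (hK : ∀ (x : Euc d) (m : ℕ),
    {σ : List (Fin N.n) | σ.length = m ∧ x ∈ N.copy σ}.ncard ≤ K)

lemma cast_two_eq (h : 2 < N.n) : ((2 : ℕ) : Fin N.n) = N.one + N.one := by
  apply Fin.ext
  rw [Fin.val_cast_of_lt h, Fin.val_add, one_val, Nat.mod_eq_of_lt (by omega)]

lemma cast_succ_eq (t : ℕ) : ((t + 1 : ℕ) : Fin N.n) = ((t : ℕ) : Fin N.n) + N.one := by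
  rw [Nat.cast_add, Nat.cast_one, one_eq_one]

include hc0 hcd hcmax hcmax1 hstable hK in
/-- All points of surviving children of a common `x`-copy are in the same component of
`F \ {x}`. -/
lemma surv_conn (x : Euc d) (κ : List (Fin N.n)) (hxκ : x ∈ N.copy κ)
    {y y' : Euc d} (hy : N.Surv x κ y) (hy' : N.Surv x κ y') :
    y' ∈ connectedComponentIn (N.F \ {x}) y := by
  obtain ⟨i, hi, hstr⟩ := xchildren_structure N hstable K hK x κ hxκ
  have hn := N.hn
  -- survivors at offsets 2 ≤ t < n
  have hsurv : ∀ t : ℕ, 2 ≤ t → t < N.n → x ∉ N.copy (κ ++ [i + (t : Fin N.n)]) := by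
    intro t h2 hlt hmem
    rcases hstr _ hmem with h | h
    · have : (t : Fin N.n) = 0 := by
        have := add_left_cancel (a := i) (b := (t : Fin N.n)) (c := 0)
          (by rw [add_zero]; exact h)
        exact this
      have := congrArg Fin.val this
      rw [Fin.val_cast_of_lt hlt, Fin.val_zero] at this
      omega
    · have : (t : Fin N.n) = N.one := add_left_cancel h
      have := congrArg Fin.val this
      rw [Fin.val_cast_of_lt hlt, one_val] at this
      omega
  -- anchor point
  obtain ⟨a, ha⟩ := copy_nonempty N (κ ++ [i + ((2:ℕ) : Fin N.n)])
  have h2n : 2 < N.n := by omega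
  -- claim A
  have claimA : ∀ t : ℕ, 2 ≤ t → t < N.n →
      ∀ p ∈ N.copy (κ ++ [i + (t : Fin N.n)]),
      p ∈ connectedComponentIn (N.F \ {x}) a := by
    intro t
    induction t with
    | zero => omega
    | succ t ih =>
        intro h2 hlt p hp
        by_cases ht2 : t + 1 = 2
        · rw [ht2] at hp
          exact conn_of_copy N c hc0 hcd cmax hcmax hcmax1 (hsurv 2 le_rfl h2n) ha hp
        · have h2t : 2 ≤ t := by omega
          have hltt : t < N.n := by omega
          -- node between offsets t and t+1
          set w := N.word κ (N.z (i + (t : Fin N.n))) with hw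
          have hwmem := child_inter N κ (i + (t : Fin N.n))
          have hw1 : w ∈ N.copy (κ ++ [i + (t : Fin N.n)]) ∧
              w ∈ N.copy (κ ++ [i + (t : Fin N.n) + N.one]) := by
            have : w ∈ ({w} : Set (Euc d)) := rfl
            rw [hw, ← hwmem] at this
            exact this
          have hwA : w ∈ connectedComponentIn (N.F \ {x}) a := ih h2t hltt w hw1.1
          have hcast : i + ((t + 1 : ℕ) : Fin N.n) = i + (t : Fin N.n) + N.one := by
            rw [cast_succ_eq, add_assoc]
          rw [hcast] at hp
          have hsurv' : x ∉ N.copy (κ ++ [i + (t : Fin N.n) + N.one]) := by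
            have := hsurv (t+1) (by omega) hlt
            rwa [hcast] at this
          have := conn_of_copy N c hc0 hcd cmax hcmax hcmax1 hsurv' hw1.2 hp
          exact conn_trans N hwA this
  -- claim B : offset 1 (if surviving)
  have claimB : x ∉ N.copy (κ ++ [i + N.one]) →
      ∀ p ∈ N.copy (κ ++ [i + N.one]), p ∈ connectedComponentIn (N.F \ {x}) a := by
    intro hns p hp
    set w := N.word κ (N.z (i + N.one)) with hw
    have hwmem := child_inter N κ (i + N.one)
    have hw1 : w ∈ N.copy (κ ++ [i + N.one]) ∧
        w ∈ N.copy (κ ++ [i + N.one + N.one]) := by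
      have : w ∈ ({w} : Set (Euc d)) := rfl
      rw [hw, ← hwmem] at this
      exact this
    have hcast2 : i + N.one + N.one = i + ((2:ℕ) : Fin N.n) := by
      rw [cast_two_eq N h2n, add_assoc]
    have hwA : w ∈ connectedComponentIn (N.F \ {x}) a := by
      apply claimA 2 le_rfl h2n
      rw [← hcast2]
      exact hw1.2
    have := conn_of_copy N c hc0 hcd cmax hcmax hcmax1 hns hw1.1 hp
    exact conn_trans N hwA this
  -- put together
  have main : ∀ p : Euc d, N.Surv x κ p → p ∈ connectedComponentIn (N.F \ {x}) a := by
    rintro p ⟨u, hxu, hpu⟩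
    have hune : u ≠ i := by
      intro h; rw [h] at hxu; exact hxu hi
    set t := (u - i).val with htdef
    have hut : u = i + (t : Fin N.n) := by
      rw [htdef, Fin.cast_val_eq_self, add_comm, sub_add_cancel]
    have htlt : t < N.n := (u - i).isLt
    have ht0 : t ≠ 0 := by
      intro h
      apply hune
      rw [hut, h]
      simp
    by_cases ht1 : t = 1
    · have : u = i + N.one := by rw [hut, ht1, cast_one_eq_one]
      rw [this] at hxu hpu
      exact claimB hxu p hpu
    · have h2t : 2 ≤ t := by omega
      apply claimA t h2t htlt
      rw [← hut]
      exact hpu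
  have hy1 := main y hy
  have hy2 := main y' hy'
  exact conn_trans N (conn_symm N hy1) hy2

end SurvConn

end Necklace

namespace Necklace

section Edge

variable {d : ℕ} (N : Necklace d)

lemma word_append_image (s t : List (Fin N.n)) (A : Set (Euc d)) :
    N.word (s ++ t) '' A = N.word s '' (N.word t '' A) := by
  rw [Set.image_image]
  exact Set.image_congr fun a _ => word_append N s t a

lemma word_single_image (i : Fin N.n) (A : Set (Euc d)) :
    N.word [i] '' A = N.f i '' A :=
  Set.image_congr fun a _ => rfl

lemma copy_concat2 (κ' : List (Fin N.n)) (i j : Fin N.n) :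
    N.copy (κ' ++ [i] ++ [j]) = N.word κ' '' (N.f i '' (N.f j '' N.F)) := by
  rw [copy_concat, word_append_image, word_single_image]

/-- The stability edge: at a non-split `x`-copy `κ'++[i]`, some boundary node lies both in
a surviving child and in a surviving sibling. -/
lemma edge (hstable : N.Stable) (x : Euc d) (κ' : List (Fin N.n)) (i : Fin N.n)
    (hx : x ∈ N.copy (κ' ++ [i]))
    (hns : ∀ j j' : Fin N.n, x ∈ N.copy (κ' ++ [i] ++ [j]) →
      x ∈ N.copy (κ' ++ [i] ++ [j']) → j = j') :
    ∃ b : Euc d, N.Surv x (κ' ++ [i]) b ∧ N.Surv x κ' b := by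
  obtain ⟨jA, jB, hABne, hAne, hBne⟩ := stable_pair N hstable i
  -- at least one of the two children avoids x
  have hpick : ∃ jC : Fin N.n, x ∉ N.copy (κ' ++ [i] ++ [jC]) ∧
      (N.f i '' (N.f jC '' N.F) ∩ N.bdry i).Nonempty := by
    by_cases hA : x ∈ N.copy (κ' ++ [i] ++ [jA])
    · by_cases hB : x ∈ N.copy (κ' ++ [i] ++ [jB])
      · exact absurd (by rw [hns jA jB hA hB]) hABne
      · exact ⟨jB, hB, hBne⟩
    · exact ⟨jA, hA, hAne⟩
  obtain ⟨jC, hCx, y₀, hy₀C, hy₀b⟩ := hpick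
  set b := N.word κ' y₀ with hbdef
  have hbC : b ∈ N.copy (κ' ++ [i] ++ [jC]) := by
    rw [copy_concat2]
    exact ⟨y₀, hy₀C, rfl⟩
  have hSurvκ : N.Surv x (κ' ++ [i]) b := ⟨jC, hCx, hbC⟩
  refine ⟨b, hSurvκ, ?_⟩
  -- which boundary node is it?
  rw [Necklace.bdry, Set.mem_insert_iff, Set.mem_singleton_iff] at hy₀b
  rcases hy₀b with h | h
  · -- y₀ = z (i - 1) ; sibling is i - 1
    refine ⟨i - N.one, ?_, ?_⟩
    · -- x not in sibling copy
      intro hxsib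
      have hxi' : x ∈ N.copy (κ' ++ [(i - N.one) + N.one]) := by
        rwa [sub_add_cancel]
      have hxb : x = N.word κ' (N.z (i - N.one)) := node_of_two N x κ' (i - N.one) hxsib hxi'
      apply hCx
      rw [hxb, ← h, ← hbdef]
      exact hbC
    · rw [copy_concat]
      exact ⟨N.z (i - N.one), z_mem_left N (i - N.one), by rw [hbdef, h]⟩
  · -- y₀ = z i ; sibling is i + 1
    refine ⟨i + N.one, ?_, ?_⟩
    · intro hxsib
      have hxb : x = N.word κ' (N.z i) := node_of_two N x κ' i hx hxsib
      apply hCx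
      rw [hxb, ← h, ← hbdef]
      exact hbC
    · rw [copy_concat]
      exact ⟨N.z i, z_mem_right N i, by rw [hbdef, h]⟩

end Edge

end Necklace

namespace Necklace

/-- Splits above (extending) a given word. -/
def SplAbove {d : ℕ} (N : Necklace d) (x : Euc d) (κ : List (Fin N.n)) :
    Set (List (Fin N.n)) := {lam | κ <+: lam ∧ N.IsSplit x lam}

section Main

variable {d : ℕ} (N : Necklace d)
variable (c : Fin N.n → ℝ) (hc0 : ∀ k, 0 < c k)
  (hcd : ∀ k x y, dist (N.f k x) (N.f k y) = c k * dist x y)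
variable (cmax : ℝ) (hcmax : ∀ k, c k ≤ cmax) (hcmax1 : cmax < 1)
variable (hstable : N.Stable)
variable (K : ℕ) (hK : ∀ (x : Euc d) (m : ℕ),
    {σ : List (Fin N.n) | σ.length = m ∧ x ∈ N.copy σ}.ncard ≤ K)

lemma one_add_one_ne_zero : N.one + N.one ≠ (0 : Fin N.n) := by
  intro h
  have := congrArg Fin.val h
  rw [Fin.val_add, one_val, Fin.val_zero,
    Nat.mod_eq_of_lt (show 1 + 1 < N.n by have := N.hn; omega)] at this
  omega

lemma surv_mem_diff {x p : Euc d} {κ : List (Fin N.n)} (hp : N.Surv x κ p) :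
    p ∈ N.F \ {x} := by
  obtain ⟨u, hxu, hpu⟩ := hp
  exact ⟨copy_subset_F N _ hpu, fun hpx => hxu (by rwa [Set.mem_singleton_iff.1 hpx] at hpu)⟩

include hc0 hcd hcmax hcmax1 hstable hK in
/-- Single-step lemma: points of surviving children of an `x`-copy connect to points of
surviving children of the parent, within `F \ {x}`. -/
lemma step (x : Euc d) (hxF : x ∈ N.F) :
    ∀ s : ℕ, ∀ (κ' : List (Fin N.n)) (i : Fin N.n), x ∈ N.copy (κ' ++ [i]) →
    (N.SplAbove x (κ' ++ [i])).ncard ≤ s → ∀ p, N.Surv x (κ' ++ [i]) p →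
    ∃ q, N.Surv x κ' q ∧ q ∈ connectedComponentIn (N.F \ {x}) p := by
  have hsplfin := splits_finite N K hK x hxF
  intro s
  induction s using Nat.strong_induction_on with
  | _ s ih =>
    intro κ' i hxκ hsple p hp
    set κ := κ' ++ [i] with hκdef
    by_cases hsp : N.IsSplit x κ
    · -- split case
      -- the exit point b
      have hEXIT : ∃ b : Euc d, N.Surv x κ' b ∧ b ∈ N.copy κ := by
        obtain ⟨i₀, hi₀, hstr⟩ := xchildren_structure N hstable K hK x κ'
          (copy_prefix_subset N ⟨[i], rfl⟩ hxκ)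
        rcases hstr i hxκ with hie | hie
        · -- i = i₀ : sibling i - 1 survives
          rw [← hie] at hstr
          have hsib : x ∉ N.copy (κ' ++ [i - N.one]) := by
            intro hmem
            rcases hstr _ hmem with h | h
            · have h2 : i + N.one = i := by
                conv_lhs => rw [← h, sub_add_cancel]
              exact add_one_ne N i h2
            · have h2 : i + (N.one + N.one) = i := by
                rw [← add_assoc, ← h, sub_add_cancel]
              exact one_add_one_ne_zero N (add_eq_left.1 h2)
          refine ⟨N.word κ' (N.z (i - N.one)), ⟨i - N.one, hsib, ?_⟩, ?_⟩
          · rw [copy_concat]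
            exact ⟨_, z_mem_left N (i - N.one), rfl⟩
          · rw [hκdef, copy_concat]
            refine ⟨_, ?_, rfl⟩
            have := z_mem_right N (i - N.one)
            rwa [sub_add_cancel] at this
        · -- i = i₀ + 1 : sibling i₀ + 1 + 1 survives
          rw [hie] at hκdef
          have hsib : x ∉ N.copy (κ' ++ [i₀ + N.one + N.one]) := by
            intro hmem
            rcases hstr _ hmem with h | h
            · rw [add_assoc] at h
              exact one_add_one_ne_zero N (add_eq_left.1 h)
            · exact add_one_ne N (i₀ + N.one) h
          refine ⟨N.word κ' (N.z (i₀ + N.one)), ⟨i₀ + N.one + N.one, hsib, ?_⟩, ?_⟩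
          · rw [copy_concat]
            exact ⟨_, z_mem_right N (i₀ + N.one), rfl⟩
          · rw [hκdef, copy_concat]
            exact ⟨_, z_mem_left N (i₀ + N.one), rfl⟩
      obtain ⟨b, hbκ', hbκ⟩ := hEXIT
      have hbx : b ≠ x := by
        have := surv_mem_diff N hbκ'
        intro h
        exact this.2 (by rw [h]; rfl)
      -- descend to a surviving child containing b
      obtain ⟨lam, u, hpre, hxlam, hblam, hxlamu⟩ :=
        descend N c hc0 hcd cmax hcmax hcmax1 hbx κ hxκ hbκ
      -- measure decreases above κ
      have hκmem : κ ∈ N.SplAbove x κ := ⟨List.prefix_rfl, hsp⟩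
      have hfinκ : (N.SplAbove x κ).Finite :=
        hsplfin.subset (fun lam' hlam' => hlam'.2)
      have hspos : 1 ≤ (N.SplAbove x κ).ncard :=
        (Set.ncard_pos hfinκ).2 ⟨κ, hκmem⟩
      have hmb : ∀ w : List (Fin N.n), κ <+: w → κ ≠ w →
          (N.SplAbove x w).ncard ≤ s - 1 := by
        intro w hw hwne
        have hsub : N.SplAbove x w ⊆ N.SplAbove x κ \ {κ} := by
          rintro lam' ⟨hpre', hsp'⟩
          refine ⟨⟨hw.trans hpre', hsp'⟩, ?_⟩
          intro hmem
          rw [Set.mem_singleton_iff] at hmem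
          rw [hmem] at hpre'
          exact hwne ((hw.eq_of_length (le_antisymm hw.length_le hpre'.length_le)))
        have h1 := Set.ncard_le_ncard hsub (hfinκ.diff)
        rw [Set.ncard_diff_singleton_of_mem hκmem] at h1
        omega
      -- walk from lam back down to κ
      have WALK : ∀ tail : List (Fin N.n), x ∈ N.copy (κ ++ tail) →
          ∀ p', N.Surv x (κ ++ tail) p' →
          ∃ q', N.Surv x κ q' ∧ q' ∈ connectedComponentIn (N.F \ {x}) p' := by
        intro tail
        induction tail using List.reverseRecOn with
        | nil =>
            intro hx' p' hp'
            rw [List.append_nil] at hp'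
            exact ⟨p', hp', mem_connectedComponentIn (surv_mem_diff N hp')⟩
        | append_singleton tail' u' ihw =>
            intro hx' p' hp'
            rw [← List.append_assoc] at hx' hp'
            have hxparent : x ∈ N.copy (κ ++ tail') :=
              copy_prefix_subset N ⟨[u'], rfl⟩ hx'
            have hwne : κ ≠ κ ++ tail' ++ [u'] := by
              intro h
              have := congrArg List.length h
              simp at this
            have hmeas := hmb (κ ++ tail' ++ [u'])
              (by rw [List.append_assoc]; exact ⟨tail' ++ [u'], rfl⟩) hwne
            have hlt : s - 1 < s := by omega
            obtain ⟨q'', hq''surv, hq''conn⟩ :=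
              ih (s-1) hlt (κ ++ tail') u' hx' hmeas p' hp'
            obtain ⟨q', hq'surv, hq'conn⟩ := ihw hxparent q'' hq''surv
            exact ⟨q', hq'surv, conn_trans N hq''conn hq'conn⟩
      obtain ⟨tail, htail⟩ := hpre
      have hsurvb : N.Surv x lam b := ⟨u, hxlamu, hblam⟩
      rw [← htail] at hxlam hsurvb
      obtain ⟨q', hq'surv, hq'conn⟩ := WALK tail hxlam b hsurvb
      -- p ~ q' (both survive κ), q' ~ b, b survives κ'
      have h1 : q' ∈ connectedComponentIn (N.F \ {x}) p :=
        surv_conn N c hc0 hcd cmax hcmax hcmax1 hstable K hK x κ hxκ hp hq'surv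
      have h2 : b ∈ connectedComponentIn (N.F \ {x}) q' := conn_symm N hq'conn
      exact ⟨b, hbκ', conn_trans N h1 h2⟩
    · -- non-split case : use the stability edge
      have hns : ∀ j j' : Fin N.n, x ∈ N.copy (κ' ++ [i] ++ [j]) →
          x ∈ N.copy (κ' ++ [i] ++ [j']) → j = j' := by
        intro j j' hj hj'
        by_contra hne
        exact hsp ⟨hxκ, j, j', hne, hj, hj'⟩
      obtain ⟨b, hbκ, hbκ'⟩ := edge N hstable x κ' i hxκ hns
      have h1 : b ∈ connectedComponentIn (N.F \ {x}) p :=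
        surv_conn N c hc0 hcd cmax hcmax hcmax1 hstable K hK x κ hxκ hp hbκ
      exact ⟨b, hbκ', h1⟩

end Main

end Necklace

namespace Necklace

section Final

variable {d : ℕ} (N : Necklace d)
variable (c : Fin N.n → ℝ) (hc0 : ∀ k, 0 < c k)
  (hcd : ∀ k x y, dist (N.f k x) (N.f k y) = c k * dist x y)
variable (cmax : ℝ) (hcmax : ∀ k, c k ≤ cmax) (hcmax1 : cmax < 1)
variable (hstable : N.Stable)
variable (K : ℕ) (hK : ∀ (x : Euc d) (m : ℕ),
    {σ : List (Fin N.n) | σ.length = m ∧ x ∈ N.copy σ}.ncard ≤ K)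

include hc0 hcd hcmax hcmax1 hstable hK in
lemma ladder (x : Euc d) (hxF : x ∈ N.F) :
    ∀ lam : List (Fin N.n), x ∈ N.copy lam → ∀ p, N.Surv x lam p →
    ∃ q, N.Surv x [] q ∧ q ∈ connectedComponentIn (N.F \ {x}) p := by
  intro lam
  induction lam using List.reverseRecOn with
  | nil =>
      intro hx' p hp
      exact ⟨p, hp, mem_connectedComponentIn (surv_mem_diff N hp)⟩
  | append_singleton lam' u ihl =>
      intro hx' p hp
      obtain ⟨q'', h1, h2⟩ := step N c hc0 hcd cmax hcmax hcmax1 hstable K hK x hxF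
        ((N.SplAbove x (lam' ++ [u])).ncard) lam' u hx' le_rfl p hp
      obtain ⟨q, h3, h4⟩ := ihl (copy_prefix_subset N ⟨[u], rfl⟩ hx') q'' h1
      exact ⟨q, h3, conn_trans N h2 h4⟩

end Final

end Necklace


/-- Every stable self-similar necklace in `ℝ^d` satisfying the open set condition has no
cut points. -/
theorem Necklace.noCutPoints_of_stable_selfSimilar_osc {d : ℕ} (N : Necklace d)
    (hstable : N.Stable) (hss : N.SelfSimilar) (hosc : N.OSC) : N.NoCutPoints := by
  intro x hx
  choose c hc0 hc1 hcd using hss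
  obtain ⟨V, hVne, hVo, hVb, hVsub, hVdisj⟩ := hosc
  have hnempty : (Finset.univ : Finset (Fin N.n)).Nonempty :=
    ⟨⟨0, by have := N.hn; omega⟩, Finset.mem_univ _⟩
  set cmin := Finset.univ.inf' hnempty c with hcmindef
  set cmax := Finset.univ.sup' hnempty c with hcmaxdef
  have hcmin : ∀ k, cmin ≤ c k := fun k => Finset.inf'_le c (Finset.mem_univ k)
  have hcmin0 : 0 < cmin := by
    rw [hcmindef, Finset.lt_inf'_iff]
    exact fun k _ => hc0 k
  have hcmax : ∀ k, c k ≤ cmax := fun k => Finset.le_sup' c (Finset.mem_univ k)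
  have hcmax1 : cmax < 1 := by
    rw [hcmaxdef, Finset.sup'_lt_iff]
    exact fun k _ => hc1 k
  obtain ⟨K, hK⟩ := ram_bound N c hc0 hcd cmin cmax hcmin hcmin0 hcmax hcmax1
    V hVne hVo hVsub hVdisj
  -- anchor point in a root surviving copy
  have hxroot : x ∈ N.copy [] := by rwa [copy_nil]
  obtain ⟨i₀, hi₀, hstr⟩ := xchildren_structure N hstable K hK x [] hxroot
  have hsib : x ∉ N.copy ([] ++ [i₀ + N.one + N.one]) := by
    intro hmem
    rcases hstr _ hmem with h | h
    · rw [add_assoc] at h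
      exact one_add_one_ne_zero N (add_eq_left.1 h)
    · exact add_one_ne N (i₀ + N.one) h
  obtain ⟨t₀, ht₀⟩ := copy_nonempty N ([] ++ [i₀ + N.one + N.one])
  have hsurvT : N.Surv x [] t₀ := ⟨_, hsib, ht₀⟩
  have ht₀mem : t₀ ∈ N.F \ {x} := surv_mem_diff N hsurvT
  -- every point of F \ {x} is in the component of t₀
  have hmain : ∀ y ∈ N.F \ {x}, y ∈ connectedComponentIn (N.F \ {x}) t₀ := by
    intro y hy
    have hyne : y ≠ x := fun h => hy.2 (by rw [h]; rfl)
    obtain ⟨lam, u, hpre, hxlam, hylam, hxlamu⟩ :=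
      descend N c hc0 hcd cmax hcmax hcmax1 hyne [] hxroot (by rw [copy_nil]; exact hy.1)
    have hsurvy : N.Surv x lam y := ⟨u, hxlamu, hylam⟩
    obtain ⟨q, hq1, hq2⟩ := ladder N c hc0 hcd cmax hcmax hcmax1 hstable K hK x hx
      lam hxlam y hsurvy
    have h3 : t₀ ∈ connectedComponentIn (N.F \ {x}) q :=
      surv_conn N c hc0 hcd cmax hcmax hcmax1 hstable K hK x [] hxroot hq1 hsurvT
    exact conn_symm N (conn_trans N hq2 h3)
  have hEQ : N.F \ {x} = connectedComponentIn (N.F \ {x}) t₀ :=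
    subset_antisymm hmain (connectedComponentIn_subset _ _)
  rw [hEQ]
  exact isConnected_connectedComponentIn_iff.2 ht₀mem
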